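/- arXiv:1203.6615 — 10 statements merged into one kernel-verified Lean document; each statement's English description precedes it below -/
import Mathlib

section
/- Let K be a field and M an m×m matrix over K[x_1,...,x_n] with m ≥ 1. If M is strongly nilpotent with index r (i.e., r is minimal such that M|_{x=y⁽ʳ⁾}···M|_{x=y⁽¹⁾} = 0 for fresh indeterminate tuples y⁽ⁱ⁾), then r ≤ m. -/
set_option maxHeartbeats 1000000
set_option synthInstance.maxHeartbeats 400000

open MvPolynomial

/-- Substitute the `i`-th fresh tuple of indeterminates for `x` in every entry of `M`. -/
noncomputable def substN {K : Type} [CommRing K] {n m : ℕ}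
    (M : Matrix (Fin m) (Fin m) (MvPolynomial (Fin n) K)) (i : ℕ) :
    Matrix (Fin m) (Fin m) (MvPolynomial (ℕ × Fin n) K) :=
  M.map (rename fun k => (i, k))

/-- The product `M|_{x=y⁽ʳ⁾} ⬝ ⋯ ⬝ M|_{x=y⁽¹⁾}` (fresh tuples indexed `r-1, …, 0`). -/
noncomputable def prodSubst {K : Type} [CommRing K] {n m : ℕ}
    (M : Matrix (Fin m) (Fin m) (MvPolynomial (Fin n) K)) (r : ℕ) :
    Matrix (Fin m) (Fin m) (MvPolynomial (ℕ × Fin n) K) :=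
  ((List.range r).reverse.map (substN M)).prod

section Aux

variable {K : Type} [Field K] {m n : ℕ}

/-- base ring -/
local notation "Rg" => MvPolynomial (ℕ × Fin n) K
/-- fraction field -/
local notation "Lf" => FractionRing (MvPolynomial (ℕ × Fin n) K)

noncomputable def phiK : MvPolynomial (ℕ × Fin n) K →+* FractionRing (MvPolynomial (ℕ × Fin n) K) :=
  algebraMap _ _

noncomputable def psiK (g : ℕ → ℕ) : MvPolynomial (ℕ × Fin n) K →+* MvPolynomial (ℕ × Fin n) K :=
  (rename (Prod.map g (id : Fin n → Fin n))).toRingHom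

noncomputable def listProd (M : Matrix (Fin m) (Fin m) (MvPolynomial (Fin n) K)) (l : List ℕ) :
    Matrix (Fin m) (Fin m) (MvPolynomial (ℕ × Fin n) K) :=
  (l.map (substN M)).prod

lemma substN_psiK (M : Matrix (Fin m) (Fin m) (MvPolynomial (Fin n) K)) (g : ℕ → ℕ) (a : ℕ) :
    (substN M a).map (psiK (K := K) (n := n) g) = substN M (g a) := by
  unfold substN
  rw [Matrix.map_map]
  have hc : (⇑(psiK (K := K) (n := n) g) ∘ ⇑(rename fun k : Fin n => (a, k)) :
      MvPolynomial (Fin n) K → MvPolynomial (ℕ × Fin n) K)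
      = ⇑(rename fun k : Fin n => (g a, k)) := by
    funext p
    show psiK g (rename (fun k : Fin n => (a, k)) p) = _
    unfold psiK
    show rename (Prod.map g id) (rename (fun k : Fin n => (a, k)) p) = _
    rw [rename_rename]
    rfl
  rw [hc]

lemma listProd_psiK (M : Matrix (Fin m) (Fin m) (MvPolynomial (Fin n) K)) (g : ℕ → ℕ)
    (l : List ℕ) :
    (listProd M l).map (psiK (K := K) (n := n) g) = listProd M (l.map g) := by
  have h1 : (listProd M l).map (psiK (K := K) (n := n) g)
      = (psiK (K := K) (n := n) g).mapMatrix (listProd M l) := rfl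
  rw [h1]
  unfold listProd
  rw [map_list_prod]
  congr 1
  rw [List.map_map, List.map_map]
  apply List.map_congr_left
  intro a _
  exact substN_psiK M g a

lemma listProd_eq_zero (M : Matrix (Fin m) (Fin m) (MvPolynomial (Fin n) K)) {r : ℕ}
    (h0 : prodSubst M r = 0) {l : List ℕ} (hlen : l.length = r) :
    listProd M l = 0 := by
  set g : ℕ → ℕ := fun j => l.getD (r - 1 - j) 0 with hg
  have hmap : (List.range r).reverse.map g = l := by
    apply List.ext_getElem
    · simp [hlen]
    · intro k h1 h2
      simp only [List.getElem_map, List.getElem_reverse, List.getElem_range] at *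
      have hk : k < r := by simpa using h1
      simp only [List.length_range]
      have h3 : r - 1 - (r - 1 - k) = k := by omega
      show l.getD (r - 1 - (r - 1 - k)) 0 = l[k]
      rw [h3]
      exact List.getD_eq_getElem l 0 h2
  have := listProd_psiK M g (List.range r).reverse
  rw [hmap] at this
  rw [← this]
  have hps : listProd M (List.range r).reverse = prodSubst M r := rfl
  rw [hps, h0]
  ext i j
  simp

end Aux

section Main

variable {K : Type} [Field K] {m n : ℕ}

noncomputable def gensW (M : Matrix (Fin m) (Fin m) (MvPolynomial (Fin n) K)) (j : ℕ) :
    Set (Fin m → FractionRing (MvPolynomial (ℕ × Fin n) K)) :=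
  { v | ∃ l : List ℕ, l.Nodup ∧ l.length = j ∧ ∃ c : Fin m,
      v = fun row => phiK ((listProd M l) row c) }

noncomputable def Wsp (M : Matrix (Fin m) (Fin m) (MvPolynomial (Fin n) K)) (j : ℕ) :
    Submodule (FractionRing (MvPolynomial (ℕ × Fin n) K))
      (Fin m → FractionRing (MvPolynomial (ℕ × Fin n) K)) :=
  Submodule.span _ (gensW M j)

lemma Wsp_succ_le (M : Matrix (Fin m) (Fin m) (MvPolynomial (Fin n) K)) (j : ℕ) :
    Wsp M (j + 1) ≤ Wsp M j := by
  rw [Wsp, Submodule.span_le]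
  rintro v ⟨l, hnd, hlen, c, rfl⟩
  have hne : l ≠ [] := by intro h; simp [h] at hlen
  obtain ⟨l', i, rfl⟩ : ∃ l' i, l = l' ++ [i] :=
    ⟨l.dropLast, l.getLast hne, (List.dropLast_append_getLast hne).symm⟩
  have hsplit : listProd M (l' ++ [i]) = listProd M l' * substN M i := by
    unfold listProd; rw [List.map_append, List.prod_append]; simp
  have hnd' : l'.Nodup := hnd.of_append_left
  have hlen' : l'.length = j := by simp at hlen; omega
  have hv : (fun row => phiK ((listProd M (l' ++ [i])) row c))
      = ∑ k : Fin m, phiK ((substN M i) k c) •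
        (fun row => phiK ((listProd M l') row k)) := by
    funext row
    simp only [hsplit, Matrix.mul_apply, map_sum, map_mul, Finset.sum_apply, Pi.smul_apply,
      smul_eq_mul]
    exact Finset.sum_congr rfl fun k _ => mul_comm _ _
  rw [hv]
  exact Submodule.sum_mem _ fun k _ => Submodule.smul_mem _ _
    (Submodule.subset_span ⟨l', hnd', hlen', k, rfl⟩)

lemma Wsp_step (M : Matrix (Fin m) (Fin m) (MvPolynomial (Fin n) K)) (j : ℕ)
    (h : Wsp M j = Wsp M (j + 1)) : Wsp M (j + 1) ≤ Wsp M (j + 2) := by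
  classical
  rw [Wsp, Submodule.span_le]
  rintro v ⟨l, hnd, hlen, c, rfl⟩
  cases l with
  | nil => simp at hlen
  | cons i l' =>
  have hlen' : l'.length = j := by simpa using hlen
  have hi : i ∉ l' := (List.nodup_cons.mp hnd).1
  have hnd' : l'.Nodup := (List.nodup_cons.mp hnd).2
  set u : Fin m → FractionRing (MvPolynomial (ℕ × Fin n) K) :=
    fun k => phiK ((listProd M l') k c) with hu
  have humem : u ∈ Wsp M (j + 1) := by
    rw [← h]; exact Submodule.subset_span ⟨l', hnd', hlen', c, rfl⟩
  rw [Wsp] at humem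
  rw [Submodule.mem_span_set'] at humem
  obtain ⟨N, f, p, hsum⟩ := humem
  choose lk hlknd hlklen ck hpk using fun k => (p k).2
  -- a fresh index t
  set T : Finset ℕ := (i :: l').toFinset ∪ Finset.univ.biUnion (fun k => (lk k).toFinset) with hT
  set t : ℕ := T.sup id + 1 with ht
  have htfresh : ∀ a ∈ T, a ≠ t := by
    intro a ha
    have := Finset.le_sup (f := id) ha
    simp only [id] at this
    omega
  have hti : i ≠ t := htfresh i (by simp [hT])
  have htl' : t ∉ l' := fun hmem => htfresh t (by simp [hT, hmem]) rfl
  have htlk : ∀ k, t ∉ lk k := fun k hmem =>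
    htfresh t (by
      rw [hT]
      apply Finset.mem_union_right
      exact Finset.mem_biUnion.mpr ⟨k, Finset.mem_univ _, List.mem_toFinset.mpr hmem⟩) rfl
  set g : ℕ → ℕ := ⇑(Equiv.swap i t) with hgdef
  have hginj : Function.Injective (Prod.map g (id : Fin n → Fin n)) :=
    Function.Injective.prodMap (Equiv.injective _) Function.injective_id
  have hpsiinj : Function.Injective ⇑(psiK (K := K) (n := n) g) := by
    unfold psiK
    exact rename_injective _ hginj
  have hcompinj : Function.Injective
      ⇑((phiK (K := K) (n := n)).comp (psiK (K := K) (n := n) g)) := by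
    rw [RingHom.coe_comp]
    exact Function.Injective.comp
      (IsFractionRing.injective (MvPolynomial (ℕ × Fin n) K)
        (FractionRing (MvPolynomial (ℕ × Fin n) K))) hpsiinj
  set Φ : FractionRing (MvPolynomial (ℕ × Fin n) K) →+*
      FractionRing (MvPolynomial (ℕ × Fin n) K) := IsFractionRing.lift hcompinj with hΦ
  have hΦφ : ∀ x : MvPolynomial (ℕ × Fin n) K, Φ (phiK x) = phiK (psiK g x) := by
    intro x
    have := IsFractionRing.lift_algebraMap
      (K := FractionRing (MvPolynomial (ℕ × Fin n) K)) hcompinj x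
    rw [hΦ]
    exact this
  -- u is fixed by Φ
  have hswapl' : l'.map g = l' := by
    conv_rhs => rw [← List.map_id l']
    refine List.map_congr_left fun a ha => ?_
    have h1 : a ≠ i := fun he => hi (he ▸ ha)
    have h2 : a ≠ t := fun he => htl' (he ▸ ha)
    exact Equiv.swap_apply_of_ne_of_ne h1 h2
  have hufix : ∀ k0 : Fin m, Φ (u k0) = u k0 := by
    intro k0
    rw [hu]
    show Φ (phiK ((listProd M l') k0 c)) = phiK ((listProd M l') k0 c)
    rw [hΦφ]
    congr 1
    have hmm := listProd_psiK M g l'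
    rw [hswapl'] at hmm
    calc psiK g ((listProd M l') k0 c) = ((listProd M l').map (psiK g)) k0 c :=
          by rw [Matrix.map_apply]
      _ = (listProd M l') k0 c := by rw [hmm]
  -- image of the generators under Φ
  set q : Fin N → Fin m → FractionRing (MvPolynomial (ℕ × Fin n) K) :=
    fun k row => phiK ((listProd M ((lk k).map g)) row (ck k)) with hq
  have hΦp : ∀ k row, Φ ((p k : Fin m → FractionRing (MvPolynomial (ℕ × Fin n) K)) row)
      = q k row := by
    intro k row
    rw [hpk k]
    show Φ (phiK ((listProd M (lk k)) row (ck k))) = _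
    rw [hΦφ, hq]
    congr 1
    calc psiK g ((listProd M (lk k)) row (ck k))
        = ((listProd M (lk k)).map (psiK g)) row (ck k) := by rw [Matrix.map_apply]
      _ = (listProd M ((lk k).map g)) row (ck k) := by rw [listProd_psiK]
  -- final target vectors
  set w : Fin N → Fin m → FractionRing (MvPolynomial (ℕ × Fin n) K) :=
    fun k row => phiK ((listProd M (i :: (lk k).map g)) row (ck k)) with hw
  have hcons : ∀ (L : List ℕ) (row c0 : Fin m),
      (listProd M (i :: L)) row c0 = ∑ k1, (substN M i) row k1 * (listProd M L) k1 c0 := by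
    intro L row c0
    unfold listProd
    rw [List.map_cons, List.prod_cons]
    exact Matrix.mul_apply
  have hvdef : (fun row => phiK ((listProd M (i :: l')) row c)) = ∑ k : Fin N, Φ (f k) • w k := by
    funext row
    have lhseq : phiK ((listProd M (i :: l')) row c)
        = ∑ k1, phiK ((substN M i) row k1) * u k1 := by
      rw [hcons, map_sum]
      exact Finset.sum_congr rfl fun k1 _ => by rw [map_mul]
    have hucomp : ∀ k1, u k1 = ∑ k : Fin N, Φ (f k) * q k k1 := by
      intro k1
      conv_lhs => rw [← hufix k1, ← hsum]
      rw [Finset.sum_apply, map_sum]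
      exact Finset.sum_congr rfl fun k _ => by
        rw [Pi.smul_apply, smul_eq_mul, map_mul, hΦp]
    rw [lhseq]
    simp only [Finset.sum_apply, Pi.smul_apply, smul_eq_mul]
    have hwrow : ∀ k, w k row = ∑ k1, phiK ((substN M i) row k1) * q k k1 := by
      intro k
      rw [hw]
      show phiK ((listProd M (i :: (lk k).map g)) row (ck k)) = _
      rw [hcons, map_sum]
      exact Finset.sum_congr rfl fun k1 _ => by rw [map_mul]
    calc ∑ k1, phiK ((substN M i) row k1) * u k1
        = ∑ k1, ∑ k : Fin N, phiK ((substN M i) row k1) * (Φ (f k) * q k k1) := by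
          refine Finset.sum_congr rfl fun k1 _ => ?_
          rw [hucomp k1, Finset.mul_sum]
      _ = ∑ k : Fin N, ∑ k1, phiK ((substN M i) row k1) * (Φ (f k) * q k k1) :=
          Finset.sum_comm
      _ = ∑ k : Fin N, Φ (f k) * w k row := by
          refine Finset.sum_congr rfl fun k _ => ?_
          rw [hwrow k, Finset.mul_sum]
          exact Finset.sum_congr rfl fun k1 _ => by ring
  rw [hvdef]
  refine Submodule.sum_mem _ fun k _ => Submodule.smul_mem _ _ (Submodule.subset_span ?_)
  refine ⟨i :: (lk k).map g, ?_, ?_, ck k, rfl⟩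
  · rw [List.nodup_cons]
    constructor
    · intro hmem
      obtain ⟨a, ha, hae⟩ := List.mem_map.mp hmem
      have h2 : (Equiv.swap i t) a = i := hae
      have h3 : (Equiv.swap i t) a = (Equiv.swap i t) t := by
        rw [h2, Equiv.swap_apply_right]
      exact htlk k ((Equiv.swap i t).injective h3 ▸ ha)
    · exact (hlknd k).map (Equiv.injective _)
  · simp [hlklen k]

lemma Wsp_stab (M : Matrix (Fin m) (Fin m) (MvPolynomial (Fin n) K)) (j : ℕ)
    (h : Wsp M j = Wsp M (j + 1)) : ∀ k, Wsp M (j + k) = Wsp M j := by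
  have hstep : ∀ k, Wsp M (j + k) = Wsp M (j + k + 1) := by
    intro k
    induction k with
    | zero => exact h
    | succ k ih =>
      exact le_antisymm (Wsp_step M (j + k) ih) (Wsp_succ_le M (j + k + 1))
  intro k
  induction k with
  | zero => rfl
  | succ k ih => exact (hstep k).symm.trans ih

end Main

theorem stmt1 {K : Type} [Field K] {m n : ℕ} (hm : 1 ≤ m)
    (M : Matrix (Fin m) (Fin m) (MvPolynomial (Fin n) K)) (r : ℕ)
    (h0 : prodSubst M r = 0)
    (hmin : ∀ r' < r, prodSubst M r' ≠ 0) :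
    r ≤ m := by
  classical
  have hWr : Wsp M r = ⊥ := by
    rw [Wsp, Submodule.span_eq_bot]
    rintro v ⟨l, _, hlen, c, rfl⟩
    have := listProd_eq_zero M h0 hlen
    funext row
    rw [this]
    simp
  have hWne : ∀ j < r, Wsp M j ≠ ⊥ := by
    intro j hj hbot
    apply hmin j hj
    have hzero : ∀ row c, phiK ((listProd M (List.range j).reverse) row c) = 0 := by
      intro row c
      have hg : (fun row => phiK ((listProd M (List.range j).reverse) row c)) ∈ Wsp M j :=
        Submodule.subset_span ⟨(List.range j).reverse, List.nodup_reverse.mpr List.nodup_range, by simp, c, rfl⟩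
      rw [hbot, Submodule.mem_bot] at hg
      exact congrFun hg row
    have hL : listProd M (List.range j).reverse = prodSubst M j := rfl
    rw [← hL]
    have hinj := IsFractionRing.injective (MvPolynomial (ℕ × Fin n) K)
      (FractionRing (MvPolynomial (ℕ × Fin n) K))
    refine Matrix.ext fun row c => ?_
    rw [Matrix.zero_apply]
    exact hinj (by rw [map_zero]; exact hzero row c)
  have hstrict : ∀ j, j < r → Wsp M (j + 1) < Wsp M j := by
    intro j hj
    refine lt_of_le_of_ne (Wsp_succ_le M j) ?_
    intro he
    have hs := Wsp_stab M j he.symm (r - j)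
    rw [show j + (r - j) = r from by omega] at hs
    exact hWne j hj (hs ▸ hWr)
  have hfin : ∀ j, j ≤ r →
      Module.finrank (FractionRing (MvPolynomial (ℕ × Fin n) K)) (Wsp M j) + j ≤ m := by
    intro j
    induction j with
    | zero =>
      intro _
      have h1 := Submodule.finrank_le (Wsp M 0)
      have h2 : Module.finrank (FractionRing (MvPolynomial (ℕ × Fin n) K))
          (Fin m → FractionRing (MvPolynomial (ℕ × Fin n) K)) = m := by
        rw [Module.finrank_pi]
        simp
      omega
    | succ j ih =>
      intro hjr
      have h1 := hstrict j (by omega)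
      have h2 := Submodule.finrank_lt_finrank_of_lt h1
      have h3 := ih (by omega)
      omega
  have := hfin r le_rfl
  omega
end

section
/- Let K be a field and M ∈ Mat_m(K[x_1,...,x_n]) be strongly nilpotent with strong nilpotency index r. Then there exists T ∈ GL_m(K) and positive integers s_1,...,s_r with s_1+···+s_r ≤ m such that T⁻¹MT is block lower triangular with zero square diagonal blocks of sizes s_1,...,s_r. -/
open MvPolynomial

namespace StrNil

section
variable {K : Type} [CommRing K] {n m : ℕ}

noncomputable def coeffMat (d : ℕ × Fin n →₀ ℕ)
    (A : Matrix (Fin m) (Fin m) (MvPolynomial (ℕ × Fin n) K)) : Matrix (Fin m) (Fin m) K :=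
  A.map (coeff d)

lemma coeffMat_mul (d : ℕ × Fin n →₀ ℕ) (A B : Matrix (Fin m) (Fin m) (MvPolynomial (ℕ × Fin n) K)) :
    coeffMat d (A * B) = ∑ p ∈ Finset.HasAntidiagonal.antidiagonal d, coeffMat p.1 A * coeffMat p.2 B := by
  ext i j
  simp only [coeffMat, Matrix.map_apply, Matrix.mul_apply, Finset.sum_apply,
    MvPolynomial.coeff_sum, coeff_mul]
  rw [Finset.sum_comm]
  simp [Matrix.sum_apply, Matrix.mul_apply, Matrix.map_apply]

noncomputable def prC (M : Matrix (Fin m) (Fin m) (MvPolynomial (Fin n) K))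
    (α : ℕ → (Fin n →₀ ℕ)) (k : ℕ) : Matrix (Fin m) (Fin m) K :=
  ((List.range k).reverse.map (fun i => M.map (coeff (α i)))).prod

lemma prodSubst_succ (M : Matrix (Fin m) (Fin m) (MvPolynomial (Fin n) K)) (k : ℕ) :
    prodSubst M (k + 1) = substN M k * prodSubst M k := by
  unfold prodSubst
  rw [List.range_succ, List.reverse_append]
  simp

lemma prC_succ (M : Matrix (Fin m) (Fin m) (MvPolynomial (Fin n) K)) (α : ℕ → (Fin n →₀ ℕ)) (k : ℕ) :
    prC M α (k + 1) = M.map (coeff (α k)) * prC M α k := by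
  unfold prC
  rw [List.range_succ, List.reverse_append]
  simp

lemma prC_congr (M : Matrix (Fin m) (Fin m) (MvPolynomial (Fin n) K)) {α β : ℕ → (Fin n →₀ ℕ)}
    (k : ℕ) (h : ∀ i < k, α i = β i) : prC M α k = prC M β k := by
  unfold prC
  congr 1
  apply List.map_congr_left
  intro i hi
  rw [h i (by simpa using (List.mem_reverse.mp hi))]
end

section
variable {K : Type} [CommRing K] {n m : ℕ}
variable (M : Matrix (Fin m) (Fin m) (MvPolynomial (Fin n) K))

lemma coeffMat_substN_eq_zero {i : ℕ} {d : ℕ × Fin n →₀ ℕ}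
    (hd : ¬ ∀ p ∈ d.support, p.1 = i) : coeffMat d (substN M i) = 0 := by
  ext a b
  simp only [coeffMat, substN, Matrix.map_apply, Matrix.zero_apply]
  apply coeff_rename_eq_zero
  intro u hu
  exfalso
  apply hd
  intro p hp
  rw [← hu] at hp
  obtain ⟨x, -, hx⟩ := Finset.mem_image.mp (Finsupp.mapDomain_support hp)
  rw [← hx]

lemma coeffMat_substN_not_mapDomain {i : ℕ} {d : ℕ × Fin n →₀ ℕ}
    (hd : ¬ ∃ u : Fin n →₀ ℕ, Finsupp.mapDomain (fun x => (i, x)) u = d) :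
    coeffMat d (substN M i) = 0 := by
  ext a b
  simp only [coeffMat, substN, Matrix.map_apply, Matrix.zero_apply]
  apply coeff_rename_eq_zero
  intro u hu
  exact absurd ⟨u, hu⟩ hd

lemma coeffMat_substN_mapDomain (i : ℕ) (e : Fin n →₀ ℕ) :
    coeffMat (Finsupp.mapDomain (fun x => (i, x)) e) (substN M i) = M.map (coeff e) := by
  ext a b
  simp only [coeffMat, substN, Matrix.map_apply]
  exact coeff_rename_mapDomain _ (fun x y h => by simpa using h) _ _

lemma coeffMat_one (d : ℕ × Fin n →₀ ℕ) :
    coeffMat (K := K) (n := n) (m := m) d 1 = if d = 0 then 1 else 0 := by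
  split_ifs with h
  · subst h
    ext a b
    simp [coeffMat, Matrix.one_apply, apply_ite (coeff (0 : ℕ × Fin n →₀ ℕ))]
  · ext a b
    simp [coeffMat, Matrix.one_apply, apply_ite (coeff d), coeff_one, if_neg (Ne.symm h)]

lemma prodSubst_zero : prodSubst M 0 = 1 := by simp [prodSubst]

lemma coeffMat_prodSubst_eq_zero (k : ℕ) (d : ℕ × Fin n →₀ ℕ)
    (hd : ¬ ∀ p ∈ d.support, p.1 < k) : coeffMat d (prodSubst M k) = 0 := by
  induction k generalizing d with
  | zero =>
    rw [prodSubst_zero, coeffMat_one, if_neg]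
    rintro rfl
    exact hd (by simp)
  | succ k ih =>
    rw [prodSubst_succ, coeffMat_mul]
    apply Finset.sum_eq_zero
    rintro ⟨d1, d2⟩ hmem
    rw [Finset.HasAntidiagonal.mem_antidiagonal] at hmem
    push_neg at hd
    obtain ⟨p, hp, hpk⟩ := hd
    have hdp : d1 p + d2 p = d p := by rw [← hmem]; simp
    have hdne : d p ≠ 0 := Finsupp.mem_support_iff.mp hp
    by_cases h1 : d1 p = 0
    · have h2 : d2 p ≠ 0 := by omega
      rw [ih d2 ?_, mul_zero]
      intro hall
      have := hall p (Finsupp.mem_support_iff.mpr h2); omega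
    · rw [coeffMat_substN_eq_zero M ?_, zero_mul]
      intro hall
      have := hall p (Finsupp.mem_support_iff.mpr h1); omega
end

section
variable {K : Type} [CommRing K] {n m : ℕ}
variable (M : Matrix (Fin m) (Fin m) (MvPolynomial (Fin n) K))

lemma coeffMat_prodSubst_succ (k : ℕ) (d : ℕ × Fin n →₀ ℕ) :
    coeffMat d (prodSubst M (k + 1)) =
      coeffMat (d.filter fun p => p.1 = k) (substN M k) *
      coeffMat (d.filter fun p => ¬ p.1 = k) (prodSubst M k) := by
  classical
  rw [prodSubst_succ, coeffMat_mul]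
  refine Finset.sum_eq_single_of_mem
    (d.filter (fun p : ℕ × Fin n => p.1 = k), d.filter (fun p : ℕ × Fin n => ¬ p.1 = k)) ?_ ?_
  · rw [Finset.HasAntidiagonal.mem_antidiagonal]
    ext p
    by_cases h : p.1 = k <;> simp [Finsupp.filter_apply, h]
  · rintro ⟨d1, d2⟩ hmem hne
    rw [Finset.HasAntidiagonal.mem_antidiagonal] at hmem
    by_cases h1 : ∀ p ∈ d1.support, p.1 = k
    · by_cases h2 : ∀ p ∈ d2.support, p.1 < k
      · exfalso
        apply hne
        have hsum : ∀ p, d1 p + d2 p = d p := by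
          intro p; rw [← hmem]; simp
        have key1 : ∀ p : ℕ × Fin n, p.1 = k → d2 p = 0 := by
          intro p hp
          by_contra hc
          have := h2 p (Finsupp.mem_support_iff.mpr hc); omega
        have key2 : ∀ p : ℕ × Fin n, ¬ p.1 = k → d1 p = 0 := by
          intro p hp
          by_contra hc
          exact hp (h1 p (Finsupp.mem_support_iff.mpr hc))
        have hd1 : d1 = d.filter (fun p => p.1 = k) := by
          ext p
          rw [Finsupp.filter_apply]
          by_cases hp : p.1 = k
          · rw [if_pos hp, ← hsum p, key1 p hp, add_zero]
          · rw [if_neg hp, key2 p hp]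
        have hd2 : d2 = d.filter (fun p => ¬ p.1 = k) := by
          ext p
          rw [Finsupp.filter_apply]
          by_cases hp : p.1 = k
          · rw [if_neg (by simpa using hp), key1 p hp]
          · rw [if_pos hp, ← hsum p, key2 p hp, zero_add]
        rw [Prod.ext_iff]
        exact ⟨hd1, hd2⟩
      · rw [coeffMat_prodSubst_eq_zero M k d2 h2, mul_zero]
    · rw [coeffMat_substN_eq_zero M h1, zero_mul]

lemma coeffMat_prodSubst_weak (k : ℕ) (d : ℕ × Fin n →₀ ℕ) :
    coeffMat d (prodSubst M k) = 0 ∨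
      ∃ α : ℕ → (Fin n →₀ ℕ), coeffMat d (prodSubst M k) = prC M α k := by
  classical
  induction k generalizing d with
  | zero =>
    by_cases h : d = 0
    · right
      refine ⟨fun _ => 0, ?_⟩
      rw [prodSubst_zero, coeffMat_one, if_pos h]
      simp [prC]
    · left
      rw [prodSubst_zero, coeffMat_one, if_neg h]
  | succ k ih =>
    rw [coeffMat_prodSubst_succ]
    rcases ih (d.filter fun p => ¬ p.1 = k) with h | ⟨α, h⟩
    · left; rw [h, mul_zero]
    · by_cases hX : ∃ u : Fin n →₀ ℕ,
        Finsupp.mapDomain (fun x => (k, x)) u = d.filter (fun p => p.1 = k)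
      · obtain ⟨u, hu⟩ := hX
        right
        refine ⟨fun i => if i = k then u else α i, ?_⟩
        rw [prC_succ, h, ← hu, coeffMat_substN_mapDomain, if_pos rfl]
        congr 1
        exact (prC_congr M k fun i hi => by simp [Nat.ne_of_lt hi]).symm
      · left
        rw [coeffMat_substN_not_mapDomain M hX, zero_mul]

lemma filter_mapDomain_fst_eq (i k : ℕ) (e : Fin n →₀ ℕ) :
    (Finsupp.mapDomain (fun x : Fin n => (i, x)) e).filter (fun p : ℕ × Fin n => p.1 = k) =
      if i = k then Finsupp.mapDomain (fun x : Fin n => (i, x)) e else 0 := by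
  classical
  split_ifs with h
  · subst h
    rw [Finsupp.filter_eq_self_iff]
    intro p hp
    have hp' : p ∈ (Finsupp.mapDomain (fun x : Fin n => (i, x)) e).support :=
      Finsupp.mem_support_iff.mpr hp
    obtain ⟨x, -, hx⟩ := Finset.mem_image.mp (Finsupp.mapDomain_support hp')
    rw [← hx]
  · rw [Finsupp.filter_eq_zero_iff]
    intro p hp
    by_contra hc
    have hp' : p ∈ (Finsupp.mapDomain (fun x : Fin n => (i, x)) e).support :=
      Finsupp.mem_support_iff.mpr hc
    obtain ⟨x, -, hx⟩ := Finset.mem_image.mp (Finsupp.mapDomain_support hp')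
    rw [← hx] at hp
    exact h hp

lemma filter_mapDomain_fst_ne (i k : ℕ) (e : Fin n →₀ ℕ) :
    (Finsupp.mapDomain (fun x : Fin n => (i, x)) e).filter (fun p : ℕ × Fin n => ¬ p.1 = k) =
      if i = k then 0 else Finsupp.mapDomain (fun x : Fin n => (i, x)) e := by
  classical
  split_ifs with h
  · subst h
    rw [Finsupp.filter_eq_zero_iff]
    intro p hp
    by_contra hc
    have hp' : p ∈ (Finsupp.mapDomain (fun x : Fin n => (i, x)) e).support :=
      Finsupp.mem_support_iff.mpr hc
    obtain ⟨x, -, hx⟩ := Finset.mem_image.mp (Finsupp.mapDomain_support hp')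
    rw [← hx] at hp
    exact hp rfl
  · rw [Finsupp.filter_eq_self_iff]
    intro p hp
    have hp' : p ∈ (Finsupp.mapDomain (fun x : Fin n => (i, x)) e).support :=
      Finsupp.mem_support_iff.mpr hp
    obtain ⟨x, -, hx⟩ := Finset.mem_image.mp (Finsupp.mapDomain_support hp')
    rw [← hx]
    simp [h]

lemma coeffMat_prodSubst_strong (k : ℕ) (α : ℕ → (Fin n →₀ ℕ)) :
    coeffMat (∑ i ∈ Finset.range k, Finsupp.mapDomain (fun x : Fin n => (i, x)) (α i))
      (prodSubst M k) = prC M α k := by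
  classical
  induction k with
  | zero =>
    rw [Finset.range_zero, Finset.sum_empty, prodSubst_zero, coeffMat_one, if_pos rfl]
    simp [prC]
  | succ k ih =>
    rw [coeffMat_prodSubst_succ]
    have hf1 : (∑ i ∈ Finset.range (k+1),
        Finsupp.mapDomain (fun x : Fin n => (i, x)) (α i)).filter (fun p : ℕ × Fin n => p.1 = k) =
        Finsupp.mapDomain (fun x : Fin n => (k, x)) (α k) := by
      rw [Finsupp.filter_sum, Finset.sum_congr rfl
        (fun i _ => filter_mapDomain_fst_eq i k (α i)), Finset.sum_range_succ, if_pos rfl,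
        Finset.sum_eq_zero (fun i hi => if_neg (Nat.ne_of_lt (Finset.mem_range.mp hi))), zero_add]
    have hf2 : (∑ i ∈ Finset.range (k+1),
        Finsupp.mapDomain (fun x : Fin n => (i, x)) (α i)).filter (fun p : ℕ × Fin n => ¬ p.1 = k) =
        ∑ i ∈ Finset.range k, Finsupp.mapDomain (fun x : Fin n => (i, x)) (α i) := by
      rw [Finsupp.filter_sum, Finset.sum_congr rfl
        (fun i _ => filter_mapDomain_fst_ne i k (α i)), Finset.sum_range_succ, if_pos rfl, add_zero]
      apply Finset.sum_congr rfl
      intro i hi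
      rw [if_neg (Nat.ne_of_lt (Finset.mem_range.mp hi))]
    rw [hf1, hf2, coeffMat_substN_mapDomain, ih, prC_succ]
end

section
variable {K : Type} [Field K] {n m : ℕ}
variable (M : Matrix (Fin m) (Fin m) (MvPolynomial (Fin n) K))

noncomputable def applyS (W : Submodule K (Fin m → K)) : Submodule K (Fin m → K) :=
  ⨆ e : Fin n →₀ ℕ, W.map (Matrix.mulVecLin (M.map (coeff e)))

noncomputable def Uc (k : ℕ) : Submodule K (Fin m → K) := (applyS M)^[k] ⊤

lemma applyS_mono {W W' : Submodule K (Fin m → K)} (h : W ≤ W') : applyS M W ≤ applyS M W' :=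
  iSup_mono fun e => Submodule.map_mono h

lemma Uc_zero : Uc M 0 = ⊤ := rfl

lemma Uc_succ (k : ℕ) : Uc M (k + 1) = applyS M (Uc M k) := Function.iterate_succ_apply' _ _ _

lemma Uc_succ_le (k : ℕ) : Uc M (k + 1) ≤ Uc M k := by
  induction k with
  | zero => exact le_top
  | succ k ih =>
    have h2 := applyS_mono M ih
    rw [← Uc_succ M k] at h2
    rw [Uc_succ M (k+1)]
    exact h2

lemma map_Uc_le (e : Fin n →₀ ℕ) (k : ℕ) :
    (Uc M k).map (Matrix.mulVecLin (M.map (coeff e))) ≤ Uc M (k + 1) := by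
  rw [Uc_succ]
  exact le_iSup (fun e => (Uc M k).map (Matrix.mulVecLin (M.map (coeff e)))) e

def pcolSet (k : ℕ) : Set (Fin m → K) :=
  {v | ∃ (α : ℕ → (Fin n →₀ ℕ)) (j : Fin m), v = (prC M α k).mulVec (Pi.single j 1)}

lemma Uc_eq_span_pcol (k : ℕ) : Uc M k = Submodule.span K (pcolSet M k) := by
  induction k with
  | zero =>
    apply le_antisymm _ le_top
    intro v _
    have hv : v = ∑ j, v j • (Pi.single j 1 : Fin m → K) := by
      ext x
      simp [Pi.single_apply]
    rw [hv]
    apply Submodule.sum_mem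
    intro j _
    apply Submodule.smul_mem
    apply Submodule.subset_span
    refine ⟨fun _ => 0, j, ?_⟩
    ext i
    simp [prC, Matrix.one_apply, Pi.single_apply, eq_comm]
  | succ k ih =>
    rw [Uc_succ, ih]
    apply le_antisymm
    · apply iSup_le
      intro e
      rw [Submodule.map_span]
      apply Submodule.span_le.mpr
      rintro _ ⟨_, ⟨α, j, rfl⟩, rfl⟩
      apply Submodule.subset_span
      refine ⟨fun i => if i = k then e else α i, j, ?_⟩
      have hc : prC M (fun i => if i = k then e else α i) k = prC M α k :=
        prC_congr M k fun i hi => by rw [if_neg (Nat.ne_of_lt hi)]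
      rw [prC_succ, hc, if_pos rfl, ← Matrix.mulVec_mulVec, Matrix.mulVecLin_apply]
    · apply Submodule.span_le.mpr
      rintro _ ⟨α, j, rfl⟩
      rw [prC_succ, ← Matrix.mulVec_mulVec]
      refine le_iSup (fun e => (Submodule.span K (pcolSet M k)).map
        (Matrix.mulVecLin (M.map (coeff (e : Fin n →₀ ℕ))))) (α k) ?_
      exact Submodule.mem_map_of_mem (Submodule.subset_span ⟨α, j, rfl⟩)
end

section
variable {K : Type} [Field K] {n m : ℕ}
variable (M : Matrix (Fin m) (Fin m) (MvPolynomial (Fin n) K))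

lemma Uc_bot_of (k : ℕ) (hz : ∀ α : ℕ → (Fin n →₀ ℕ), prC M α k = 0) : Uc M k = ⊥ := by
  rw [Uc_eq_span_pcol, ← le_bot_iff]
  apply Submodule.span_le.mpr
  rintro _ ⟨α, j, rfl⟩
  rw [hz α, Matrix.zero_mulVec]
  exact Submodule.zero_mem ⊥

lemma Uc_ne_bot_of (k : ℕ) (hnz : ∃ α : ℕ → (Fin n →₀ ℕ), prC M α k ≠ 0) : Uc M k ≠ ⊥ := by
  obtain ⟨α, hα⟩ := hnz
  have : ∃ i j, prC M α k i j ≠ 0 := by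
    by_contra h
    push_neg at h
    exact hα (by ext i j; simp [h])
  obtain ⟨i, j, hij⟩ := this
  intro hbot
  have hmem : (prC M α k).mulVec (Pi.single j 1) ∈ Uc M k := by
    rw [Uc_eq_span_pcol]
    exact Submodule.subset_span ⟨α, j, rfl⟩
  rw [hbot, Submodule.mem_bot] at hmem
  apply hij
  simpa [Matrix.mulVec_single] using congrFun hmem i

lemma Uc_strict (r : ℕ) (hz : ∀ α : ℕ → (Fin n →₀ ℕ), prC M α r = 0)
    (hnz : ∀ k < r, ∃ α : ℕ → (Fin n →₀ ℕ), prC M α k ≠ 0)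
    {k : ℕ} (hk : k < r) : Uc M (k + 1) ≠ Uc M k := by
  intro heq
  have hstep : ∀ j, k ≤ j → Uc M j = Uc M k := by
    intro j hj
    induction j, hj using Nat.le_induction with
    | base => rfl
    | succ j hj ih => rw [Uc_succ, ih, ← Uc_succ M k, heq]
  exact Uc_ne_bot_of M k (hnz k hk) (by rw [← hstep r (by omega)]; exact Uc_bot_of M r hz)

lemma adapted (r : ℕ) (hUbot : Uc M r = ⊥)
    (hstrict : ∀ k < r, Uc M (k + 1) ≠ Uc M k) :
    ∀ q k, k + q = r →
    ∃ (c : ℕ) (t : Fin c → (Fin m → K)) (b : Fin c → ℕ),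
      LinearIndependent K t ∧ Monotone b ∧
      (∀ i, k ≤ b i ∧ b i < r) ∧
      (∀ j, k ≤ j → j < r → ∃ i, b i = j) ∧
      (∀ j, k ≤ j → j ≤ r → Submodule.span K (t '' {i | j ≤ b i}) = Uc M j) := by
  intro q
  induction q with
  | zero =>
    intro k hk
    refine ⟨0, fun i => i.elim0, fun i => i.elim0, linearIndependent_empty_type,
      fun i => i.elim0, fun i => i.elim0, fun j h1 h2 => by omega, fun j h1 h2 => ?_⟩
    have hj : j = r := by omega
    have hemp : ({i : Fin 0 | j ≤ (fun i => i.elim0 : Fin 0 → ℕ) i}) = ∅ :=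
      Set.eq_empty_of_isEmpty _
    rw [hemp, Set.image_empty, Submodule.span_empty, hj, hUbot]
  | succ q ih =>
    intro k hk
    obtain ⟨c, t, b, hli, hmono, hrange, hsurj, hspan⟩ := ih (k + 1) (by omega)
    have hkr : k < r := by omega
    set p : Submodule K ↥(Uc M k) := (Uc M (k + 1)).comap (Uc M k).subtype with hp
    obtain ⟨q', hq'⟩ := Submodule.exists_isCompl p
    set Q : Submodule K (Fin m → K) := q'.map (Uc M k).subtype with hQ
    have hQle : Q ≤ Uc M k := Submodule.map_subtype_le _ _
    have hmapp : Submodule.map (Uc M k).subtype p = Uc M (k + 1) := by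
      rw [hp, Submodule.map_comap_subtype, inf_eq_right.mpr (Uc_succ_le M k)]
    have hsup : Uc M (k + 1) ⊔ Q = Uc M k := by
      rw [hQ, ← hmapp, ← Submodule.map_sup, hq'.sup_eq_top, Submodule.map_subtype_top]
    have hdis : Disjoint (Uc M (k + 1)) Q := by
      rw [disjoint_iff, hQ, ← hmapp,
        ← Submodule.map_inf _ (Submodule.injective_subtype (Uc M k)),
        hq'.inf_eq_bot, Submodule.map_bot]
    have hQne : Q ≠ ⊥ := by
      intro h
      apply hstrict k hkr
      rw [← hsup, h, sup_bot_eq]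
    set s := Module.finrank K ↥Q with hs
    have hs1 : 0 < s := by
      rw [hs, Nat.pos_iff_ne_zero]
      intro h0
      exact hQne (Submodule.finrank_eq_zero.mp h0)
    set bQ := Module.finBasis K ↥Q with hbQ
    set u : Fin s → (Fin m → K) := fun i => ((bQ i : ↥Q) : Fin m → K) with hu
    have hliu : LinearIndependent K u :=
      bQ.linearIndependent.map' Q.subtype (Submodule.ker_subtype Q)
    have hspanu : Submodule.span K (Set.range u) = Q := by
      have h1 : Set.range u = Q.subtype '' (Set.range bQ) := by
        rw [← Set.range_comp]; rfl
      rw [h1, ← Submodule.map_span, bQ.span_eq, Submodule.map_subtype_top]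
    have hspant : Submodule.span K (Set.range t) = Uc M (k + 1) := by
      have huniv : {i : Fin c | k + 1 ≤ b i} = Set.univ :=
        Set.eq_univ_of_forall fun i => (hrange i).1
      rw [← hspan (k + 1) le_rfl (by omega), huniv, Set.image_univ]
    -- the appended families
    have happ : Fin.append u t = (Sum.elim u t) ∘ ⇑finSumFinEquiv.symm := by
      funext x
      refine Fin.addCases (fun x1 => ?_) (fun x1 => ?_) x
      · rw [Fin.append_left, Function.comp_apply, finSumFinEquiv_symm_apply_castAdd]; rfl
      · rw [Fin.append_right, Function.comp_apply, finSumFinEquiv_symm_apply_natAdd]; rfl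
    have haux : ∀ x : Fin (s + c),
        (∃ x1 : Fin s, Fin.append u t x = u x1 ∧ Fin.append (fun _ => k) b x = k ∧ (x : ℕ) = x1) ∨
        (∃ x2 : Fin c, Fin.append u t x = t x2 ∧ Fin.append (fun _ => k) b x = b x2 ∧
          (x : ℕ) = s + x2) := by
      intro x
      refine Fin.addCases (fun x1 => ?_) (fun x1 => ?_) x
      · exact Or.inl ⟨x1, Fin.append_left _ _ _, Fin.append_left _ _ _, rfl⟩
      · exact Or.inr ⟨x1, Fin.append_right _ _ _, Fin.append_right _ _ _, rfl⟩
    refine ⟨s + c, Fin.append u t, Fin.append (fun _ => k) b, ?_, ?_, ?_, ?_, ?_⟩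
    · rw [happ]
      exact ((hliu.sum_type hli) (by rw [hspanu, hspant]; exact hdis.symm)).comp
        _ finSumFinEquiv.symm.injective
    · intro x y hxy
      rw [Fin.le_def] at hxy
      rcases haux x with ⟨x1, -, hbx, hvx⟩ | ⟨x2, -, hbx, hvx⟩
      · rcases haux y with ⟨y1, -, hby, hvy⟩ | ⟨y2, -, hby, hvy⟩
        · rw [hbx, hby]
        · rw [hbx, hby]; have := (hrange y2).1; omega
      · rcases haux y with ⟨y1, -, hby, hvy⟩ | ⟨y2, -, hby, hvy⟩
        · have h1 := y1.isLt; omega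
        · rw [hbx, hby]; exact hmono (by rw [Fin.le_def]; omega)
    · intro x
      rcases haux x with ⟨x1, -, hbx, -⟩ | ⟨x2, -, hbx, -⟩
      · rw [hbx]; exact ⟨le_rfl, hkr⟩
      · rw [hbx]; exact ⟨by have := (hrange x2).1; omega, (hrange x2).2⟩
    · intro j hj1 hj2
      by_cases hjk : j = k
      · refine ⟨Fin.castAdd c ⟨0, hs1⟩, ?_⟩
        rw [hjk]
        exact Fin.append_left _ _ _
      · obtain ⟨i, hi⟩ := hsurj j (by omega) hj2
        exact ⟨Fin.natAdd s i, by rw [Fin.append_right, hi]⟩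
    · intro j hj1 hj2
      by_cases hjk : j = k
      · rw [hjk]
        have huniv : {x : Fin (s + c) | k ≤ Fin.append (fun _ => k) b x} = Set.univ := by
          apply Set.eq_univ_of_forall
          intro x
          rcases haux x with ⟨x1, -, hbx, -⟩ | ⟨x2, -, hbx, -⟩
          · simp [Set.mem_setOf_eq, hbx]
          · simp only [Set.mem_setOf_eq, hbx]; have := (hrange x2).1; omega
        rw [huniv, Set.image_univ, happ,
          (finSumFinEquiv.symm.surjective).range_comp, Set.Sum.elim_range,
          Submodule.span_union, hspanu, hspant, sup_comm, hsup]
      · have himg : Fin.append u t '' {x | j ≤ Fin.append (fun _ => k) b x} =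
            t '' {i | j ≤ b i} := by
          apply Set.Subset.antisymm
          · rintro _ ⟨x, hx, rfl⟩
            rcases haux x with ⟨x1, -, hbx, -⟩ | ⟨x2, ht2, hbx, -⟩
            · rw [Set.mem_setOf_eq, hbx] at hx; omega
            · rw [ht2]
              exact ⟨x2, by rw [Set.mem_setOf_eq, ← hbx]; exact hx, rfl⟩
          · rintro _ ⟨i2, hi2, rfl⟩
            refine ⟨Fin.natAdd s i2, ?_, Fin.append_right _ _ _⟩
            rw [Set.mem_setOf_eq, Fin.append_right]
            exact hi2
        rw [himg, hspan j (by omega) hj2]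
end

section
variable {K : Type} [Field K] {n m : ℕ}

lemma conj_entry (B' : Module.Basis (Fin m) K (Fin m → K)) (A : Matrix (Fin m) (Fin m) K) (i j : Fin m) :
    (((Pi.basisFun K (Fin m)).toMatrix ⇑B')⁻¹ * A * ((Pi.basisFun K (Fin m)).toMatrix ⇑B')) i j
      = B'.repr (A.mulVec (B' j)) i := by
  classical
  set P := Pi.basisFun K (Fin m) with hP
  set T := P.toMatrix ⇑B' with hT
  have hTinv : T⁻¹ = B'.toMatrix ⇑P :=
    Matrix.inv_eq_left_inv (B'.toMatrix_mul_toMatrix_flip P)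
  have hAT : ∀ l, (A * T) l j = A.mulVec (B' j) l := by
    intro l
    rw [Matrix.mul_apply, Matrix.mulVec, dotProduct]
    refine Finset.sum_congr rfl fun a _ => ?_
    rw [hT, Module.Basis.toMatrix_apply, Pi.basisFun_repr]
  rw [Matrix.mul_assoc]
  calc (T⁻¹ * (A * T)) i j
      = ∑ l, B'.repr (P l) i * (A.mulVec (B' j)) l := by
        rw [Matrix.mul_apply]
        exact Finset.sum_congr rfl fun l _ => by rw [hTinv, Module.Basis.toMatrix_apply, hAT]
    _ = B'.repr (∑ l, (A.mulVec (B' j)) l • P l) i := by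
        simp only [map_sum, Finset.sum_apply']
        exact Finset.sum_congr rfl fun l _ => by
          rw [map_smul, Finsupp.smul_apply, smul_eq_mul, mul_comm]
    _ = B'.repr (A.mulVec (B' j)) i := by
        have hx : (∑ l, (A.mulVec (B' j)) l • P l) = A.mulVec (B' j) := by
          ext a
          simp [hP, Pi.basisFun_apply, Pi.single_apply, Finset.sum_apply, mul_ite,
            Finset.sum_ite_eq, Finset.sum_ite_eq']
        rw [hx]

lemma coeff_conj_entry (M : Matrix (Fin m) (Fin m) (MvPolynomial (Fin n) K))
    (A B : Matrix (Fin m) (Fin m) K) (e : Fin n →₀ ℕ) (i j : Fin m) :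
    coeff e (((A.map (algebraMap K (MvPolynomial (Fin n) K))) * M *
      (B.map (algebraMap K (MvPolynomial (Fin n) K)))) i j) =
      (A * M.map (coeff e) * B) i j := by
  simp only [Matrix.mul_apply, Matrix.map_apply, algebraMap_eq, coeff_sum]
  refine Finset.sum_congr rfl fun x _ => ?_
  rw [mul_comm _ (C (B x j)), coeff_C_mul, coeff_sum, mul_comm]
  congr 1
  refine Finset.sum_congr rfl fun y _ => ?_
  rw [coeff_C_mul]
end

end StrNil

theorem stmt2 {K : Type} [Field K] {m n : ℕ}
    (M : Matrix (Fin m) (Fin m) (MvPolynomial (Fin n) K)) (r : ℕ)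
    (h0 : prodSubst M r = 0)
    (hmin : ∀ r' < r, prodSubst M r' ≠ 0) :
    ∃ T : Matrix (Fin m) (Fin m) K, IsUnit T.det ∧
      ∃ blk : Fin m → Fin r, Monotone blk ∧
        (∀ k : Fin r, 1 ≤ (Finset.univ.filter fun i => blk i = k).card) ∧
        ∀ i j : Fin m, blk i ≤ blk j →
          ((T⁻¹.map (algebraMap K (MvPolynomial (Fin n) K))) * M *
            (T.map (algebraMap K (MvPolynomial (Fin n) K)))) i j = 0 := by
  classical
  have hz : ∀ α : ℕ → (Fin n →₀ ℕ), StrNil.prC M α r = 0 := by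
    intro α
    rw [← StrNil.coeffMat_prodSubst_strong M r α, h0]
    ext i j
    simp [StrNil.coeffMat]
  have hnz : ∀ k, k < r → ∃ α : ℕ → (Fin n →₀ ℕ), StrNil.prC M α k ≠ 0 := by
    intro k hk
    have hne := hmin k hk
    have hco : ∃ d, StrNil.coeffMat d (prodSubst M k) ≠ 0 := by
      by_contra hcon
      push_neg at hcon
      apply hne
      ext i j d
      have h2 : StrNil.coeffMat d (prodSubst M k) i j = 0 := by rw [hcon d]; rfl
      simp only [StrNil.coeffMat, Matrix.map_apply] at h2
      simp [h2]
    obtain ⟨d, hd⟩ := hco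
    rcases StrNil.coeffMat_prodSubst_weak M k d with h | ⟨α, hα⟩
    · exact absurd h hd
    · exact ⟨α, hα ▸ hd⟩
  have hUbot : StrNil.Uc M r = ⊥ := StrNil.Uc_bot_of M r hz
  have hstrict : ∀ k < r, StrNil.Uc M (k + 1) ≠ StrNil.Uc M k :=
    fun k hk => StrNil.Uc_strict M r hz hnz hk
  obtain ⟨c, t, b, hli, hmono, hrangeB, hsurjB, hspan⟩ :=
    StrNil.adapted M r hUbot hstrict r 0 (by omega)
  have hspanTop : Submodule.span K (Set.range t) = ⊤ := by
    have huniv : {i : Fin c | 0 ≤ b i} = Set.univ := Set.eq_univ_of_forall fun i => Nat.zero_le _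
    rw [← Set.image_univ, ← huniv]
    rw [hspan 0 le_rfl (Nat.zero_le r)]
    exact StrNil.Uc_zero M
  let B : Module.Basis (Fin c) K (Fin m → K) := Module.Basis.mk hli (le_of_eq hspanTop.symm)
  have hcm : c = m := by
    have h1 := Module.finrank_eq_card_basis B
    rw [Module.finrank_fin_fun, Fintype.card_fin] at h1
    omega
  let B' : Module.Basis (Fin m) K (Fin m → K) := B.reindex (finCongr hcm)
  have hB' : ∀ j : Fin m, B' j = t (finCongr hcm.symm j) := by
    intro j
    show B.reindex (finCongr hcm) j = _
    rw [Module.Basis.reindex_apply]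
    show B ((finCongr hcm).symm j) = _
    rw [show (finCongr hcm).symm j = finCongr hcm.symm j from by simp [Fin.ext_iff]]
    exact congrFun (Module.Basis.coe_mk hli (le_of_eq hspanTop.symm)) _
  set T : Matrix (Fin m) (Fin m) K := (Pi.basisFun K (Fin m)).toMatrix ⇑B' with hT
  have hdet : IsUnit T.det := by
    have : Invertible T := (Pi.basisFun K (Fin m)).invertibleToMatrix B'
    exact Matrix.isUnit_det_of_invertible T
  refine ⟨T, hdet, fun i => ⟨b (finCongr hcm.symm i), (hrangeB _).2⟩, ?_, ?_, ?_⟩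
  · intro i j hij
    show (⟨b (finCongr hcm.symm i), _⟩ : Fin r) ≤ _
    rw [Fin.mk_le_mk]
    apply hmono
    rw [Fin.le_def]
    simpa using hij
  · intro k
    obtain ⟨i0, hi0⟩ := hsurjB k (Nat.zero_le _) k.isLt
    refine Nat.one_le_iff_ne_zero.mpr (Finset.card_ne_zero_of_mem (a := finCongr hcm i0) ?_)
    rw [Finset.mem_filter]
    refine ⟨Finset.mem_univ _, ?_⟩
    rw [Fin.ext_iff]
    show b (finCongr hcm.symm (finCongr hcm i0)) = (k : ℕ)
    rw [show finCongr hcm.symm (finCongr hcm i0) = i0 from by simp [Fin.ext_iff], hi0]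
  · intro i j hij
    apply MvPolynomial.ext
    intro ev
    rw [MvPolynomial.coeff_zero, StrNil.coeff_conj_entry M T⁻¹ T ev i j]
    have key : (T⁻¹ * M.map (MvPolynomial.coeff ev) * T) i j = 0 := by
      rw [hT, StrNil.conj_entry B' (M.map (MvPolynomial.coeff ev)) i j]
      set x := finCongr hcm.symm j with hx
      have htj : t x ∈ StrNil.Uc M (b x) := by
        rw [← hspan (b x) (Nat.zero_le _) (le_of_lt (hrangeB x).2)]
        exact Submodule.subset_span ⟨x, by simp, rfl⟩
      have hw : (M.map (MvPolynomial.coeff ev)).mulVec (t x) ∈ StrNil.Uc M (b x + 1) := by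
        apply StrNil.map_Uc_le M ev (b x)
        exact ⟨t x, htj, Matrix.mulVecLin_apply _ _⟩
      rw [← hspan (b x + 1) (Nat.zero_le _) (hrangeB x).2] at hw
      have himg : t '' {i0 : Fin c | b x + 1 ≤ b i0} =
          ⇑B' '' {i' : Fin m | b x + 1 ≤ b (finCongr hcm.symm i')} := by
        ext v
        constructor
        · rintro ⟨i0, hi0, rfl⟩
          refine ⟨finCongr hcm i0, ?_, ?_⟩
          · rw [Set.mem_setOf_eq, show finCongr hcm.symm (finCongr hcm i0) = i0 from by
              simp [Fin.ext_iff]]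
            exact hi0
          · rw [hB', show finCongr hcm.symm (finCongr hcm i0) = i0 from by simp [Fin.ext_iff]]
        · rintro ⟨i', hi', rfl⟩
          exact ⟨finCongr hcm.symm i', hi', (hB' i').symm⟩
      rw [himg] at hw
      rw [hB' j, ← hx]
      have hsupp := B'.repr_support_subset_of_mem_span _ hw
      have hnotin : i ∉ {i' : Fin m | b x + 1 ≤ b (finCongr hcm.symm i')} := by
        intro hmem
        rw [Set.mem_setOf_eq] at hmem
        rw [Fin.mk_le_mk] at hij
        have hxj : b x = b (finCongr hcm.symm j) := by rw [hx]
        omega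
      refine Finsupp.notMem_support_iff.mp fun hmem => hnotin (hsupp hmem)
    exact key
end

section
/- Let K be a field and M ∈ Mat_m(K[x_1,...,x_n]). If M|_{x=y⁽ʳ⁾} ··· M|_{x=y⁽¹⁾} = 0 for fresh indeterminate tuples y⁽ⁱ⁾ but M|_{x=y⁽ʳ⁻¹⁾} ··· M|_{x=y⁽¹⁾} ≠ 0, then the columns of M are linearly dependent over K, i.e., there exists a nonzero vector v ∈ Kᵐ with M·v = 0. -/
open MvPolynomial

namespace Stmt3Aux

/-- The variables other than the `s`-th fresh tuple. -/
abbrev T (n s : ℕ) := {q : ℕ × Fin n // ¬ q.1 = s}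

/-- Split the variables into the `s`-th tuple and the rest. -/
noncomputable def E (n s : ℕ) : (ℕ × Fin n) ≃ (Fin n ⊕ T n s) :=
  (Equiv.sumCompl (fun q : ℕ × Fin n => q.1 = s)).symm.trans
    (Equiv.sumCongr
      ⟨fun q => q.1.2, fun k => ⟨(s, k), rfl⟩,
        fun q => by obtain ⟨⟨a, b⟩, h⟩ := q; subst h; rfl,
        fun k => rfl⟩
      (Equiv.refl _))

noncomputable def φ (K : Type) [CommRing K] (n s : ℕ) :
    MvPolynomial (ℕ × Fin n) K ≃ₐ[K] MvPolynomial (Fin n) (MvPolynomial (T n s) K) :=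
  (renameEquiv K (E n s)).trans (sumAlgEquiv K (Fin n) (T n s))

variable {K : Type} [CommRing K] {n : ℕ} (s : ℕ)

lemma E_pos (k : Fin n) : E n s (s, k) = Sum.inl k := by
  simp [E, Equiv.sumCompl_symm_apply_of_pos (p := fun q : ℕ × Fin n => q.1 = s) (a := (s, k)) rfl]

lemma E_neg {i : ℕ} (h : ¬ i = s) (k : Fin n) : E n s (i, k) = Sum.inr ⟨(i, k), h⟩ := by
  simp [E, Equiv.sumCompl_symm_apply_of_neg (p := fun q : ℕ × Fin n => q.1 = s) (a := (i, k)) h]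

lemma φ_X_pos (k : Fin n) : φ K n s (X (s, k)) = X k := by
  simp [φ, renameEquiv_apply, rename_X, E_pos]

lemma φ_X_neg {i : ℕ} (h : ¬ i = s) (k : Fin n) :
    φ K n s (X (i, k)) = C (X ⟨(i, k), h⟩) := by
  simp [φ, renameEquiv_apply, rename_X, E_neg s h]

lemma φ_rename_s (p : MvPolynomial (Fin n) K) :
    φ K n s (rename (fun k => (s, k)) p) =
      MvPolynomial.map (algebraMap K (MvPolynomial (T n s) K)) p := by
  have h : ((φ K n s).toAlgHom.comp (rename fun k : Fin n => (s, k))) =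
      mapAlgHom (Algebra.ofId K (MvPolynomial (T n s) K)) := by
    apply algHom_ext
    intro k
    simp [φ_X_pos, mapAlgHom_apply]
  have := DFunLike.congr_fun h p
  simpa [mapAlgHom_apply] using this

/-- Rename into the complement variables (value at `i = s` is irrelevant). -/
noncomputable def g (n s : ℕ) (i : ℕ) (k : Fin n) : T n s :=
  ⟨((if i = s then i + 1 else i), k), by split <;> omega⟩

lemma φ_rename_ne {i : ℕ} (h : ¬ i = s) (p : MvPolynomial (Fin n) K) :
    φ K n s (rename (fun k => (i, k)) p) = C (rename (g n s i) p) := by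
  have hg : ∀ k : Fin n, g n s i k = ⟨(i, k), h⟩ := by
    intro k; simp [g, h]
  have h2 : ((φ K n s).toAlgHom.comp (rename fun k : Fin n => (i, k))) =
      (IsScalarTower.toAlgHom K (MvPolynomial (T n s) K)
        (MvPolynomial (Fin n) (MvPolynomial (T n s) K))).comp (rename (g n s i)) := by
    apply algHom_ext
    intro k
    simp [φ_X_neg s h, hg, algebraMap_eq]
  have := DFunLike.congr_fun h2 p
  simpa [algebraMap_eq] using this

end Stmt3Aux

theorem stmt3 {K : Type} [Field K] {m n : ℕ}
    (M : Matrix (Fin m) (Fin m) (MvPolynomial (Fin n) K)) (r : ℕ) (hr : 0 < r)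
    (h0 : prodSubst M r = 0)
    (h1 : prodSubst M (r - 1) ≠ 0) :
    ∃ v : Fin m → K, v ≠ 0 ∧ M.mulVec (fun i => C (v i)) = 0 := by
  classical
  set s := r - 1 with hs
  set R := MvPolynomial (Stmt3Aux.T n s) K with hR
  set ψ : MvPolynomial (ℕ × Fin n) K →+* MvPolynomial (Fin n) R :=
    (Stmt3Aux.φ K n s).toAlgHom.toRingHom with hψ
  have hψapp : ∀ p, ψ p = Stmt3Aux.φ K n s p := fun p => rfl
  -- split the product
  have hsplit : prodSubst M r = substN M s * prodSubst M s := by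
    have hrs : r = s + 1 := by omega
    rw [hrs, prodSubst, List.range_succ, List.reverse_append, List.reverse_singleton,
      List.singleton_append, List.map_cons, List.prod_cons]
    rfl
  -- the product over the complement variables
  set Q : Matrix (Fin m) (Fin m) R :=
    ((List.range s).reverse.map (fun i => M.map (rename (Stmt3Aux.g n s i)))).prod with hQdef
  have hQ : ψ.mapMatrix (prodSubst M s) = (C : R →+* MvPolynomial (Fin n) R).mapMatrix Q := by
    rw [prodSubst, hQdef, map_list_prod, map_list_prod, List.map_map, List.map_map]
    congr 1
    apply List.map_congr_left
    intro i hi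
    have hi' : ¬ i = s := by
      simp only [List.mem_reverse, List.mem_range] at hi; omega
    refine Matrix.ext fun k l => ?_
    simp only [Function.comp_apply, RingHom.mapMatrix_apply, Matrix.map_apply, substN]
    exact Stmt3Aux.φ_rename_ne s hi' (M k l)
  have hMs : ψ.mapMatrix (substN M s) = M.map (MvPolynomial.map (algebraMap K R)) := by
    refine Matrix.ext fun k l => ?_
    simp only [RingHom.mapMatrix_apply, Matrix.map_apply, substN]
    exact Stmt3Aux.φ_rename_s s (M k l)
  have heq : M.map (MvPolynomial.map (algebraMap K R)) *
      (C : R →+* MvPolynomial (Fin n) R).mapMatrix Q = 0 := by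
    rw [← hMs, ← hQ, ← map_mul, ← hsplit, h0, map_zero]
  -- Q ≠ 0
  have hQne : Q ≠ 0 := by
    intro hQ0
    apply h1
    refine Matrix.ext fun k l => ?_
    have h2 : ψ.mapMatrix (prodSubst M s) k l = 0 := by
      rw [hQ, hQ0, map_zero]; rfl
    have h3 : Stmt3Aux.φ K n s (prodSubst M s k l) = 0 := by
      simp only [RingHom.mapMatrix_apply, Matrix.map_apply] at h2
      exact h2
    simpa using (map_eq_zero_iff (Stmt3Aux.φ K n s) (Stmt3Aux.φ K n s).injective).mp h3
  obtain ⟨k0, l0, hk0⟩ : ∃ k0 l0, Q k0 l0 ≠ 0 := by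
    by_contra h
    push_neg at h
    exact hQne (Matrix.ext fun k l => by simpa using h k l)
  obtain ⟨d, hd⟩ : ∃ d, coeff d (Q k0 l0) ≠ 0 := by
    by_contra h
    push_neg at h
    exact hk0 (MvPolynomial.ext _ _ fun d => by simpa using h d)
  refine ⟨fun i => coeff d (Q i l0), ?_, ?_⟩
  · intro hv
    exact hd (by simpa using congrFun hv k0)
  · -- the row equations
    have hrow : ∀ (k : Fin m) (e : Fin n →₀ ℕ),
        ∑ i, coeff e (M k i) * coeff d (Q i l0) = 0 := by
      intro k e
      have h2 := Matrix.ext_iff.mpr heq k l0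
      rw [Matrix.mul_apply, Matrix.zero_apply] at h2
      have h3 := congrArg (coeff e) h2
      rw [coeff_sum, coeff_zero] at h3
      have h4 : ∑ i, algebraMap K R (coeff e (M k i)) * Q i l0 = 0 := by
        rw [← h3]
        apply Finset.sum_congr rfl
        intro i _
        simp only [Matrix.map_apply, RingHom.mapMatrix_apply]
        rw [mul_comm ((MvPolynomial.map (algebraMap K R)) (M k i)) (C (Q i l0)),
          coeff_C_mul, coeff_map, mul_comm]
      have h5 := congrArg (coeff d) h4
      rw [coeff_sum, coeff_zero] at h5
      rw [← h5]
      apply Finset.sum_congr rfl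
      intro i _
      rw [algebraMap_eq, coeff_C_mul]
    funext k
    show ∑ i, M k i * C (coeff d (Q i l0)) = 0
    apply MvPolynomial.ext
    intro e
    rw [coeff_sum, coeff_zero, ← hrow k e]
    apply Finset.sum_congr rfl
    intro i _
    rw [mul_comm (M k i) (C (coeff d (Q i l0))), coeff_C_mul, mul_comm]
end

section
/- Let K be a field of characteristic zero and H ∈ K[x_1,...,x_n]ⁿ. If there exists T ∈ GL_n(K) such that the Jacobian matrix of T⁻¹H(Tx) is block lower triangular with r zero square diagonal blocks (sizes s_1,...,s_r ≥ 1), then (JH)|_{x=y⁽ʳ⁾} · (JH)|_{x=y⁽ʳ⁻¹⁾} ··· (JH)|_{x=y⁽¹⁾} = 0 for fresh indeterminate tuples y⁽ⁱ⁾. -/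
open MvPolynomial

/-- The Jacobian matrix `(∂H_i/∂x_j)` of a polynomial map `H`. -/
noncomputable def jac {K : Type} [CommRing K] {n : ℕ}
    (H : Fin n → MvPolynomial (Fin n) K) :
    Matrix (Fin n) (Fin n) (MvPolynomial (Fin n) K) :=
  Matrix.of fun i j => pderiv j (H i)

/-- The polynomial map `T⁻¹ ∘ H ∘ T`, i.e. `x ↦ T⁻¹·H(T·x)`. -/
noncomputable def conjH {K : Type} [Field K] {n : ℕ}
    (T : Matrix (Fin n) (Fin n) K) (H : Fin n → MvPolynomial (Fin n) K) :
    Fin n → MvPolynomial (Fin n) K :=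
  fun i => ∑ j, C (T⁻¹ i j) * aeval (fun l => ∑ k, C (T l k) * X k) (H j)

/-- Chain rule for `pderiv` of `aeval`. -/
lemma pderiv_aeval_eq {K : Type} [CommRing K] {n : ℕ} {τ : Type} [DecidableEq τ]
    (f : Fin n → MvPolynomial τ K) (b : τ) (p : MvPolynomial (Fin n) K) :
    pderiv b (aeval f p) = ∑ k, aeval f (pderiv k p) * pderiv b (f k) := by
  let F : MvPolynomial (Fin n) K →ₐ[K] MvPolynomial τ K := aeval f
  show pderiv b (F p) = ∑ k, F (pderiv k p) * pderiv b (f k)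
  induction p using MvPolynomial.induction_on with
  | C a => simp [F]
  | add p q hp hq =>
      simp only [map_add, hp, hq, ← Finset.sum_add_distrib, add_mul]
  | mul_X p k hp =>
      have h1 : ∑ j, F (pderiv j (p * X k)) * pderiv b (f j)
          = (∑ j, F (pderiv j p) * f k * pderiv b (f j))
            + ∑ j, (F p * F (pderiv j (X k))) * pderiv b (f j) := by
        rw [← Finset.sum_add_distrib]
        refine Finset.sum_congr rfl fun j _ => ?_
        rw [Derivation.leibniz, smul_eq_mul, smul_eq_mul, map_add, map_mul, map_mul,
          show F (X k) = f k from aeval_X f k, add_mul]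
        ring_nf
      have h2 : ∑ j, (F p * F (pderiv j (X k))) * pderiv b (f j)
          = F p * pderiv b (f k) := by
        rw [Finset.sum_eq_single k] <;>
          simp +contextual [F, pderiv_X, Pi.single_apply, eq_comm]
      rw [h1, h2, map_mul, show F (X k) = f k from aeval_X f k, Derivation.leibniz, smul_eq_mul,
        smul_eq_mul, hp, Finset.mul_sum]
      rw [Finset.sum_congr rfl fun j _ => (by ring :
        f k * (F (pderiv j p) * pderiv b (f j)) = F (pderiv j p) * f k * pderiv b (f j))]
      rw [add_comm]

lemma pderiv_lin {K : Type} [CommRing K] {n : ℕ} (v : Fin n → K) (b : Fin n) :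
    pderiv b (∑ k, C (v k) * X k : MvPolynomial (Fin n) K) = C (v b) := by
  rw [map_sum, Finset.sum_eq_single b] <;>
    simp +contextual [pderiv_X, Pi.single_apply, eq_comm]

/-- Strictly block-triangular matrices: product of enough of them vanishes. -/
lemma prod_strict_zero {R : Type*} [CommRing R] {n r : ℕ} (blk : Fin n → Fin r)
    (L : List (Matrix (Fin n) (Fin n) R))
    (h : ∀ M ∈ L, ∀ a b : Fin n, blk a ≤ blk b → M a b = 0) :
    ∀ a b : Fin n, (blk a : ℕ) < (blk b : ℕ) + L.length → L.prod a b = 0 := by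
  induction L with
  | nil =>
      intro a b hab
      simp only [List.length_nil, Nat.add_zero] at hab
      simp only [List.prod_nil, Matrix.one_apply]
      rw [if_neg]
      rintro rfl
      omega
  | cons M L ih =>
      intro a b hab
      rw [List.prod_cons, Matrix.mul_apply]
      refine Finset.sum_eq_zero fun c _ => ?_
      by_cases hc : blk a ≤ blk c
      · rw [h M (List.mem_cons_self (a := M) (l := L)) a c hc, zero_mul]
      · push_neg at hc
        have h1 : (blk c : ℕ) < (blk a : ℕ) := hc
        simp only [List.length_cons] at hab
        rw [ih (fun N hN => h N (List.mem_cons_of_mem M hN)) c b (by omega), mul_zero]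

theorem stmt4 {K : Type} [Field K] [CharZero K] {n r : ℕ}
    (H : Fin n → MvPolynomial (Fin n) K)
    (T : Matrix (Fin n) (Fin n) K) (hT : IsUnit T.det)
    (blk : Fin n → Fin r) (hmono : Monotone blk)
    (hpos : ∀ k : Fin r, ∃ i, blk i = k)
    (hzero : ∀ i j : Fin n, blk i ≤ blk j → jac (conjH T H) i j = 0) :
    prodSubst (jac H) r = 0 := by
  -- the substitution x_{i,k} ↦ ∑_l T_{k,l} x_{i,l} and its inverse
  set Φ : MvPolynomial (ℕ × Fin n) K →ₐ[K] MvPolynomial (ℕ × Fin n) K := aeval (fun p : ℕ × Fin n => ∑ k, C (T p.2 k) * X (p.1, k)) with hΦ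
  set Ψ : MvPolynomial (ℕ × Fin n) K →ₐ[K] MvPolynomial (ℕ × Fin n) K := aeval (fun p : ℕ × Fin n => ∑ k, C (T⁻¹ p.2 k) * X (p.1, k)) with hΨ
  set σ : MvPolynomial (Fin n) K →ₐ[K] MvPolynomial (Fin n) K :=
    aeval (fun l => ∑ k, C (T l k) * X k) with hσ
  have hTT : T * T⁻¹ = 1 := Matrix.mul_nonsing_inv T hT
  have hTT' : T⁻¹ * T = 1 := Matrix.nonsing_inv_mul T hT
  set TC : Matrix (Fin n) (Fin n) (MvPolynomial (ℕ × Fin n) K) := (C : K →+* MvPolynomial (ℕ × Fin n) K).mapMatrix T with hTC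
  set TiC : Matrix (Fin n) (Fin n) (MvPolynomial (ℕ × Fin n) K) := (C : K →+* MvPolynomial (ℕ × Fin n) K).mapMatrix T⁻¹ with hTiC
  have hTC1 : TC * TiC = 1 := by rw [hTC, hTiC, ← map_mul, hTT, map_one]
  have hTC2 : TiC * TC = 1 := by rw [hTC, hTiC, ← map_mul, hTT', map_one]
  -- rename commutes with the substitutions
  have hcomm : ∀ (i : ℕ) (p : MvPolynomial (Fin n) K),
      rename (fun k => ((i, k) : ℕ × Fin n)) (σ p)
        = Φ (rename (fun k => (i, k)) p) := by
    intro i p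
    have : ((rename (fun k => ((i, k) : ℕ × Fin n))).comp σ : MvPolynomial (Fin n) K →ₐ[K] MvPolynomial (ℕ × Fin n) K)
        = Φ.comp (rename fun k => (i, k)) := by
      apply MvPolynomial.algHom_ext
      intro l
      simp only [AlgHom.comp_apply, hσ, hΦ, aeval_X, map_sum, map_mul, rename_C]
      simp [rename_X]
    exact congrArg (fun F : MvPolynomial (Fin n) K →ₐ[K] MvPolynomial (ℕ × Fin n) K => F p) this
  -- key: substituted jacobian of conjH is conjugate of Φ-image of substituted jacobian of H
  have key : ∀ i : ℕ, substN (jac (conjH T H)) i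
      = TiC * ((substN (jac H) i).map Φ) * TC := by
    intro i
    refine Matrix.ext fun a b => ?_
    have hJ : jac (conjH T H) a b
        = ∑ c, (∑ j, C (T⁻¹ a j) * σ (pderiv c (H j))) * C (T c b) := by
      show pderiv b (∑ j, C (T⁻¹ a j) * σ (H j)) = _
      rw [map_sum]
      rw [Finset.sum_congr rfl fun j _ => pderiv_C_mul]
      rw [Finset.sum_congr rfl fun j _ => by
        rw [show (σ (H j) : MvPolynomial (Fin n) K)
            = aeval (fun l => ∑ k, C (T l k) * X k) (H j) from rfl,
          pderiv_aeval_eq, Finset.mul_sum,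
          Finset.sum_congr rfl fun c _ => by rw [pderiv_lin (T c)]]]
      rw [Finset.sum_comm]
      refine Finset.sum_congr rfl fun c _ => ?_
      rw [Finset.sum_mul]
      refine Finset.sum_congr rfl fun j _ => ?_
      ring
    show rename (fun k => ((i, k) : ℕ × Fin n)) (jac (conjH T H) a b) = _
    rw [hJ, map_sum]
    rw [Matrix.mul_apply]
    refine Finset.sum_congr rfl fun c _ => ?_
    rw [Matrix.mul_apply, map_mul, rename_C, map_sum]
    congr 1
    refine Finset.sum_congr rfl fun j _ => ?_
    rw [map_mul, rename_C, hcomm i]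
    rfl
  -- product relation
  have prodrel : ∀ m : ℕ, prodSubst (jac (conjH T H)) m
      = TiC * ((prodSubst (jac H) m).map Φ) * TC := by
    intro m
    induction m with
    | zero =>
        show (1 : Matrix (Fin n) (Fin n) (MvPolynomial (ℕ × Fin n) K)) = TiC * (1 : Matrix (Fin n) (Fin n) (MvPolynomial (ℕ × Fin n) K)).map Φ * TC
        rw [show ((1 : Matrix (Fin n) (Fin n) (MvPolynomial (ℕ × Fin n) K)).map Φ : Matrix (Fin n) (Fin n) (MvPolynomial (ℕ × Fin n) K))
            = Φ.toRingHom.mapMatrix (1 : Matrix (Fin n) (Fin n) (MvPolynomial (ℕ × Fin n) K)) from rfl,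
          map_one, mul_one, hTC2]
    | succ m ih =>
        have hrange : ∀ (M : Matrix (Fin n) (Fin n) (MvPolynomial (Fin n) K)),
            prodSubst M (m + 1) = substN M m * prodSubst M m := by
          intro M
          rw [prodSubst, List.range_succ, List.reverse_append]
          simp [prodSubst]
        rw [hrange, hrange, ih, key m]
        have hmap : ((substN (jac H) m * prodSubst (jac H) m).map Φ : Matrix (Fin n) (Fin n) (MvPolynomial (ℕ × Fin n) K))
            = (substN (jac H) m).map Φ * (prodSubst (jac H) m).map Φ :=
          map_mul Φ.toRingHom.mapMatrix _ _
        rw [hmap]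
        rw [show TiC * (substN (jac H) m).map Φ * TC * (TiC * (prodSubst (jac H) m).map Φ * TC)
            = TiC * (substN (jac H) m).map Φ * (TC * TiC) * (prodSubst (jac H) m).map Φ * TC by
          noncomm_ring, hTC1, mul_one]
        noncomm_ring
  -- the conjugated product vanishes
  have hvanish : prodSubst (jac (conjH T H)) r = 0 := by
    refine Matrix.ext fun a b => ?_
    have hlen : ((List.range r).reverse.map (substN (jac (conjH T H)))).length = r := by simp
    have := prod_strict_zero blk ((List.range r).reverse.map (substN (jac (conjH T H))))
      (by
        intro M hM x y hxy
        obtain ⟨i, _, rfl⟩ := List.mem_map.mp hM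
        show rename (fun k => ((i, k) : ℕ × Fin n)) (jac (conjH T H) x y) = 0
        rw [hzero x y hxy, map_zero]) a b
    rw [hlen] at this
    exact this (by have := (blk a).isLt; omega)
  -- conclude
  have hΦzero : (prodSubst (jac H) r).map Φ = 0 := by
    have h0 : TiC * ((prodSubst (jac H) r).map Φ) * TC = 0 := by
      rw [← prodrel, hvanish]
    calc (prodSubst (jac H) r).map Φ
        = TC * (TiC * ((prodSubst (jac H) r).map Φ) * TC) * TiC := by
          rw [show TC * (TiC * ((prodSubst (jac H) r).map Φ) * TC) * TiC
              = (TC * TiC) * (prodSubst (jac H) r).map Φ * (TC * TiC) by noncomm_ring,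
            hTC1, one_mul, mul_one]
      _ = 0 := by rw [h0, mul_zero, zero_mul]
  -- Φ is injective since Ψ ∘ Φ = id
  have key2 : ∀ (i : ℕ) (l : Fin n), Ψ (Φ (X ((i, l) : ℕ × Fin n))) = X (i, l) := by
    intro i l
    rw [hΦ, aeval_X, map_sum]
    have step : ∀ k : Fin n, Ψ (C (T l k) * X ((i, k) : ℕ × Fin n))
        = ∑ m, C (T l k * T⁻¹ k m) * X ((i, m) : ℕ × Fin n) := by
      intro k
      rw [map_mul, hΨ, aeval_X, ← MvPolynomial.algebraMap_eq, AlgHom.commutes,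
        MvPolynomial.algebraMap_eq, Finset.mul_sum]
      refine Finset.sum_congr rfl fun m _ => ?_
      rw [← mul_assoc, ← map_mul]
    rw [Finset.sum_congr rfl fun k _ => step k, Finset.sum_comm]
    have h2 : ∀ m : Fin n, (∑ k, C (T l k * T⁻¹ k m) * (X ((i, m) : ℕ × Fin n) : MvPolynomial (ℕ × Fin n) K))
        = C ((T * T⁻¹) l m) * X (i, m) := by
      intro m
      rw [← Finset.sum_mul, ← map_sum, Matrix.mul_apply]
    rw [Finset.sum_congr rfl fun m _ => h2 m, hTT]
    rw [Finset.sum_eq_single l] <;> simp +contextual [Matrix.one_apply, eq_comm]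
  have hΨΦ : ∀ p : MvPolynomial (ℕ × Fin n) K, Ψ (Φ p) = p := by
    intro p
    have : (Ψ.comp Φ : MvPolynomial (ℕ × Fin n) K →ₐ[K] MvPolynomial (ℕ × Fin n) K) = AlgHom.id K (MvPolynomial (ℕ × Fin n) K) := by
      apply MvPolynomial.algHom_ext
      rintro ⟨i, l⟩
      exact key2 i l
    exact congrArg (fun F : MvPolynomial (ℕ × Fin n) K →ₐ[K] MvPolynomial (ℕ × Fin n) K => F p) this
  refine Matrix.ext fun a b => ?_
  show prodSubst (jac H) r a b = (0 : Matrix (Fin n) (Fin n) (MvPolynomial (ℕ × Fin n) K)) a b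
  have : Φ (prodSubst (jac H) r a b) = 0 := congrFun (congrFun hΦzero a) b
  have h2 := congrArg Ψ this
  rw [hΨΦ, map_zero] at h2
  simpa using h2
end

section
/- Let K be a field of characteristic zero and H ∈ K[x]ⁿ = K[x_1,...,x_n]ⁿ. If (JH)|_{x=y⁽ʳ⁾} ··· (JH)|_{x=y⁽¹⁾} = 0 for fresh indeterminate tuples, then for every j with 1 ≤ j ≤ r, the polynomial map (JH)|_{x=y⁽ʳ⁾} ··· (JH)|_{x=y⁽ʲ⁺¹⁾} · H(y⁽ʲ⁾ + H(y⁽ʲ⁻¹⁾ + ··· + H(y⁽¹⁾)···)) is constant with respect to y⁽¹⁾. -/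
open MvPolynomial

/-- The nested composition `H(y⁽ʲ⁾ + H(y⁽ʲ⁻¹⁾ + ⋯ + H(y⁽¹⁾)⋯))`,
with the fresh tuple `y⁽ⁱ⁾` realized as the variables `X (i-1, ·)`. -/
noncomputable def nest {K : Type} [CommRing K] {n : ℕ}
    (H : Fin n → MvPolynomial (Fin n) K) : ℕ → Fin n → MvPolynomial (ℕ × Fin n) K
  | 0 => 0
  | j + 1 => fun i => aeval (fun k => X (j, k) + nest H j k) (H i)

/-- The product `(JH)|_{x=y⁽ʳ⁾} ⬝ ⋯ ⬝ (JH)|_{x=y⁽ʲ⁺¹⁾}` (fresh tuples indexed `r-1, …, j`). -/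
noncomputable def tailProd {K : Type} [CommRing K] {n : ℕ}
    (H : Fin n → MvPolynomial (Fin n) K) (j r : ℕ) :
    Matrix (Fin n) (Fin n) (MvPolynomial (ℕ × Fin n) K) :=
  (((List.range' j (r - j)).reverse).map (substN (jac H))).prod

variable {K : Type} [CommRing K] {n : ℕ}

/-- Chain rule for `aeval`. -/
lemma chainRule (g : Fin n → MvPolynomial (ℕ × Fin n) K) (d : ℕ × Fin n)
    (f : MvPolynomial (Fin n) K) :
    pderiv d (aeval g f) = ∑ l, aeval g (pderiv l f) * pderiv d (g l) := by
  induction f using MvPolynomial.induction_on with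
  | C a => simp
  | add p q hp hq =>
      rw [map_add, map_add, hp, hq, ← Finset.sum_add_distrib]
      simp [add_mul]
  | mul_X p l hp =>
      have key : ∀ m : Fin n, aeval g (pderiv m (p * X l)) * pderiv d (g m)
          = aeval g (pderiv m p) * pderiv d (g m) * g l
            + aeval g p * (if m = l then pderiv d (g l) else 0) := by
        intro m
        rw [pderiv_mul, map_add, map_mul, map_mul, aeval_X, pderiv_X]
        by_cases h : m = l
        · subst h
          rw [Pi.single_eq_same, if_pos rfl, map_one]
          ring
        · rw [Pi.single_eq_of_ne (Ne.symm h), if_neg h, map_zero, mul_zero, add_zero,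
            add_zero]
          ring
      rw [Finset.sum_congr rfl (fun m _ => key m), Finset.sum_add_distrib,
        ← Finset.mul_sum, Finset.sum_ite_eq' Finset.univ l]
      simp only [Finset.mem_univ, if_true]
      rw [map_mul, aeval_X, pderiv_mul, hp, Finset.sum_mul]

lemma pderiv_rename_ne (t : ℕ) (ht : t ≠ 0) (k : Fin n) (p : MvPolynomial (Fin n) K) :
    pderiv ((0 : ℕ), k) (rename (fun m => (t, m)) p) = 0 := by
  apply pderiv_eq_zero_of_notMem_vars
  intro h
  obtain ⟨m, _, hm⟩ := Finset.mem_image.mp (vars_rename _ _ h)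
  exact ht (congrArg Prod.fst hm)

lemma pderiv_listProd_entry (d : ℕ × Fin n)
    (L : List (Matrix (Fin n) (Fin n) (MvPolynomial (ℕ × Fin n) K)))
    (h : ∀ M ∈ L, ∀ i l, pderiv d (M i l) = 0) :
    ∀ i l, pderiv d (L.prod i l) = 0 := by
  induction L with
  | nil =>
      intro i l
      rw [List.prod_nil, Matrix.one_apply]
      split <;> simp
  | cons M L ih =>
      intro i l
      rw [List.prod_cons, Matrix.mul_apply, map_sum]
      apply Finset.sum_eq_zero
      intro m _
      rw [pderiv_mul, h M List.mem_cons_self i m,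
        ih (fun N hN => h N (List.mem_cons_of_mem _ hN)) m l, zero_mul, mul_zero, add_zero]

lemma matrix_map_listProd (f : MvPolynomial (ℕ × Fin n) K →+* MvPolynomial (ℕ × Fin n) K)
    (L : List (Matrix (Fin n) (Fin n) (MvPolynomial (ℕ × Fin n) K))) :
    (L.prod).map f = (L.map (fun M => M.map f)).prod := by
  induction L with
  | nil => simp [Matrix.map_one f (map_zero f) (map_one f)]
  | cons M L ih => rw [List.prod_cons, Matrix.map_mul, ih, List.map_cons, List.prod_cons]

/-- The Jacobian of `H` evaluated at `y⁽ˢ⁾ + nest H s`. -/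
noncomputable def Amat (H : Fin n → MvPolynomial (Fin n) K) (s : ℕ) :
    Matrix (Fin n) (Fin n) (MvPolynomial (ℕ × Fin n) K) :=
  Matrix.of fun i l => aeval (fun m => X (s, m) + nest H s m) (pderiv l (H i))

/-- Product `Amat (t-1) ⬝ ⋯ ⬝ Amat 0`. -/
noncomputable def Rmat (H : Fin n → MvPolynomial (Fin n) K) (t : ℕ) :
    Matrix (Fin n) (Fin n) (MvPolynomial (ℕ × Fin n) K) :=
  ((List.range t).reverse.map (Amat H)).prod

lemma nest_pderiv (H : Fin n → MvPolynomial (Fin n) K) :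
    ∀ t : ℕ, 1 ≤ t → ∀ i k : Fin n,
      pderiv ((0 : ℕ), k) (nest H t i) = Rmat H t i k := by
  intro t
  induction t with
  | zero => intro h; omega
  | succ t ih =>
      intro _ i k
      have hR : Rmat H (t + 1) = Amat H t * Rmat H t := by
        rw [Rmat, List.range_succ, List.reverse_append, List.reverse_singleton,
          List.singleton_append, List.map_cons, List.prod_cons, Rmat]
      show pderiv ((0 : ℕ), k) (aeval (fun m => X (t, m) + nest H t m) (H i)) = _
      rw [chainRule]
      rcases Nat.eq_zero_or_pos t with ht0 | ht1
      · subst ht0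
        have hg : ∀ l : Fin n,
            pderiv ((0 : ℕ), k) (X ((0 : ℕ), l) + nest H 0 l : MvPolynomial (ℕ × Fin n) K)
              = if l = k then 1 else 0 := by
          intro l
          show pderiv ((0 : ℕ), k) (X ((0 : ℕ), l) + 0 : MvPolynomial (ℕ × Fin n) K) = _
          rw [add_zero]
          by_cases h : l = k
          · subst h; rw [pderiv_X_self, if_pos rfl]
          · rw [pderiv_X_of_ne (by simp [h]), if_neg h]
        rw [Finset.sum_congr rfl (fun l _ => by rw [hg l])]
        simp only [mul_ite, mul_one, mul_zero, Finset.sum_ite_eq' Finset.univ k,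
          Finset.mem_univ, if_true]
        rw [hR]
        have : Rmat H 0 = 1 := by simp [Rmat]
        rw [this, Matrix.mul_one]
        rfl
      · have hg : ∀ l : Fin n,
            pderiv ((0 : ℕ), k) (X ((t : ℕ), l) + nest H t l : MvPolynomial (ℕ × Fin n) K)
              = Rmat H t l k := by
          intro l
          rw [map_add, pderiv_X_of_ne (by simp [Nat.pos_iff_ne_zero.mp ht1]), zero_add,
            ih ht1 l k]
        rw [Finset.sum_congr rfl (fun l _ => by rw [hg l]), hR, Matrix.mul_apply]
        rfl

lemma rename_eq_aeval_X (t : ℕ) (q : MvPolynomial (Fin n) K) :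
    aeval (fun m => (X ((t, m) : ℕ × Fin n) : MvPolynomial (ℕ × Fin n) K)) q
      = rename (fun m => ((t, m) : ℕ × Fin n)) q := by
  induction q using MvPolynomial.induction_on with
  | C a => simp
  | add p q hp hq => rw [map_add, map_add, hp, hq]
  | mul_X p i hp => rw [map_mul, map_mul, hp, aeval_X, rename_X]

theorem stmt5 {K : Type} [Field K] [CharZero K] {n r : ℕ}
    (H : Fin n → MvPolynomial (Fin n) K)
    (h0 : prodSubst (jac H) r = 0) :
    ∀ j : ℕ, 1 ≤ j → j ≤ r → ∀ i : Fin n, ∀ k : Fin n,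
      pderiv ((0 : ℕ), k) (((tailProd H j r).mulVec (nest H j)) i) = 0 := by
  intro j hj1 hjr i k
  -- the substitution y⁽ᵗ⁾ ↦ y⁽ᵗ⁾ + nest t for t < j
  set g : ℕ × Fin n → MvPolynomial (ℕ × Fin n) K :=
    fun p => if p.1 < j then X p + nest H p.1 p.2 else X p with hg
  set σ : MvPolynomial (ℕ × Fin n) K →+* MvPolynomial (ℕ × Fin n) K :=
    (aeval g).toRingHom with hσ
  have e1 : ∀ t : ℕ, ¬ t < j → (substN (jac H) t).map ⇑σ = substN (jac H) t := by
    intro t ht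
    refine Matrix.ext fun i' l => ?_
    show σ (rename (fun m => ((t, m) : ℕ × Fin n)) (jac H i' l)) = _
    show aeval g (rename (fun m => ((t, m) : ℕ × Fin n)) (jac H i' l)) = _
    rw [aeval_rename]
    have : (g ∘ fun m => ((t, m) : ℕ × Fin n))
        = fun m => (X ((t, m) : ℕ × Fin n) : MvPolynomial (ℕ × Fin n) K) := by
      funext m; simp [hg, ht]
    rw [this, rename_eq_aeval_X]
    rfl
  have e2 : ∀ t : ℕ, t < j → (substN (jac H) t).map ⇑σ = Amat H t := by
    intro t ht
    refine Matrix.ext fun i' l => ?_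
    show aeval g (rename (fun m => ((t, m) : ℕ × Fin n)) (jac H i' l)) = _
    rw [aeval_rename]
    have : (g ∘ fun m => ((t, m) : ℕ × Fin n))
        = fun m => X ((t, m) : ℕ × Fin n) + nest H t m := by
      funext m; simp [hg, ht]
    rw [this]
    rfl
  have hsplit : List.range r = List.range j ++ List.range' j (r - j) := by
    have h1 : (r - j) + j = r := Nat.sub_add_cancel hjr
    calc List.range r = List.range' 0 ((r - j) + j) := by rw [h1, List.range_eq_range']
    _ = List.range' 0 j ++ List.range' (0 + 1 * j) (r - j) :=
        by rw [List.range'_append, Nat.add_comm]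
    _ = List.range j ++ List.range' j (r - j) := by
        rw [List.range_eq_range', Nat.zero_add, Nat.one_mul]
  have hzero : tailProd H j r * Rmat H j = 0 := by
    have hmap : (prodSubst (jac H) r).map ⇑σ = tailProd H j r * Rmat H j := by
      rw [prodSubst, matrix_map_listProd, List.map_map, hsplit, List.reverse_append,
        List.map_append, List.prod_append]
      congr 1
      · rw [tailProd]
        apply congrArg List.prod
        apply List.map_congr_left
        intro t ht
        rw [List.mem_reverse, List.mem_range'] at ht
        exact e1 t (by omega)
      · rw [Rmat]
        apply congrArg List.prod
        apply List.map_congr_left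
        intro t ht
        rw [List.mem_reverse, List.mem_range] at ht
        exact e2 t ht
    rw [← hmap, h0]
    ext i' l
    simp
  have htail : ∀ i' l : Fin n, pderiv ((0 : ℕ), k) (tailProd H j r i' l) = 0 := by
    apply pderiv_listProd_entry
    intro M hM i' l
    obtain ⟨t, htmem, rfl⟩ := List.mem_map.mp hM
    rw [List.mem_reverse, List.mem_range'] at htmem
    show pderiv ((0 : ℕ), k) (rename (fun m => ((t, m) : ℕ × Fin n)) (jac H i' l)) = 0
    exact pderiv_rename_ne t (by omega) k _
  show pderiv ((0 : ℕ), k) (∑ m, tailProd H j r i m * nest H j m) = 0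
  rw [map_sum]
  have : ∀ m : Fin n, pderiv ((0 : ℕ), k) (tailProd H j r i m * nest H j m)
      = tailProd H j r i m * Rmat H j m k := by
    intro m
    rw [pderiv_mul, htail i m, zero_mul, zero_add, nest_pderiv H j hj1 m k]
  rw [Finset.sum_congr rfl (fun m _ => this m), ← Matrix.mul_apply, hzero]
  rfl
end

section
/- For the polynomial map H = (0, x₁², x₁³, 3x₂x₁² − 2x₃x₁) in dimension 4 over ℚ, the Jacobian JH satisfies (JH)² = 0 (nilpotency index two), but the strong nilpotency index of JH equals 3; in particular (JH)|_{x=y}·(JH)|_{x=z} ≠ 0 for fresh indeterminate tuples y, z, while (JH)|_{x=w}·(JH)|_{x=y}·(JH)|_{x=z} = 0. -/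
open MvPolynomial

/-- The map `H = (0, x₁², x₁³, 3x₂x₁² − 2x₃x₁)` in dimension 4 over ℚ. -/
noncomputable def H8 : Fin 4 → MvPolynomial (Fin 4) ℚ :=
  ![0, X 0 ^ 2, X 0 ^ 3, 3 * X 1 * X 0 ^ 2 - 2 * X 2 * X 0]

lemma pd3 (j : Fin 4) : pderiv j (3 : MvPolynomial (Fin 4) ℚ) = 0 := by
  rw [show (3:MvPolynomial (Fin 4) ℚ) = C 3 from (map_ofNat C 3).symm, pderiv_C]
lemma pd2 (j : Fin 4) : pderiv j (2 : MvPolynomial (Fin 4) ℚ) = 0 := by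
  rw [show (2:MvPolynomial (Fin 4) ℚ) = C 2 from (map_ofNat C 2).symm, pderiv_C]

lemma jacH8 : jac H8 = !![0,0,0,0; 2*X 0,0,0,0; 3*X 0^2,0,0,0;
    6*X 1*X 0 - 2*X 2, 3*X 0^2, -2*X 0, 0] := by
  ext i j
  fin_cases i <;> fin_cases j <;>
    simp [jac, H8, pderiv_X, Pi.single_apply, pd2, pd3, Matrix.vecHead,
      Matrix.vecTail] <;> ring

lemma rn2 (i : ℕ) : (rename fun k => (i, k)) (2 : MvPolynomial (Fin 4) ℚ) = 2 :=
  map_ofNat _ 2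
lemma rn3 (i : ℕ) : (rename fun k => (i, k)) (3 : MvPolynomial (Fin 4) ℚ) = 3 :=
  map_ofNat _ 3
lemma rn6 (i : ℕ) : (rename fun k => (i, k)) (6 : MvPolynomial (Fin 4) ℚ) = 6 :=
  map_ofNat _ 6

lemma substN8 (i : ℕ) : substN (jac H8) i = !![0,0,0,0;
    2*X (i,(0:Fin 4)),0,0,0; 3*X (i,(0:Fin 4))^2,0,0,0;
    6*X (i,(1:Fin 4))*X (i,(0:Fin 4)) - 2*X (i,(2:Fin 4)), 3*X (i,(0:Fin 4))^2,
      -2*X (i,(0:Fin 4)), 0] := by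
  rw [jacH8]
  ext a b
  fin_cases a <;> fin_cases b <;>
    simp [substN, rn2, rn3, rn6, Matrix.vecHead, Matrix.vecTail]

lemma prod10 : substN (jac H8) 1 * substN (jac H8) 0 = !![0,0,0,0;0,0,0,0;0,0,0,0;
    6*X ((1:ℕ),(0:Fin 4))^2*X ((0:ℕ),(0:Fin 4))
      - 6*X ((1:ℕ),(0:Fin 4))*X ((0:ℕ),(0:Fin 4))^2, 0,0,0] := by
  rw [substN8, substN8]
  ext a b
  fin_cases a <;> fin_cases b <;>
    simp [Matrix.mul_apply, Fin.sum_univ_four, Matrix.vecHead, Matrix.vecTail] <;> ring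

theorem stmt8 :
    jac H8 * jac H8 = 0 ∧
    substN (jac H8) 1 * substN (jac H8) 0 ≠ 0 ∧
    substN (jac H8) 2 * substN (jac H8) 1 * substN (jac H8) 0 = 0 := by
  refine ⟨?_, ?_, ?_⟩
  · rw [jacH8]
    ext a b
    fin_cases a <;> fin_cases b <;>
      simp [Matrix.mul_apply, Fin.sum_univ_four, Matrix.vecHead, Matrix.vecTail] <;> ring
  · intro h
    rw [prod10] at h
    have h2 := congrFun (congrFun h 3) 0
    simp [Matrix.vecHead, Matrix.vecTail] at h2
    have := congrArg (eval fun p => if p = ((1:ℕ),(0:Fin 4)) then (1:ℚ) else 2) h2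
    simp [Prod.ext_iff] at this
    norm_num at this
  · rw [mul_assoc, prod10, substN8]
    ext a b
    fin_cases a <;> fin_cases b <;>
      simp [Matrix.mul_apply, Fin.sum_univ_four, Matrix.vecHead, Matrix.vecTail]
end

section
/- Let D be a division ring, S a set, and M an m×m matrix whose entries are functions from S to D (m ≥ 1). Then M satisfies M|_{v_r}·M|_{v_{r−1}}···M|_{v_1} = 0 for all v_1,...,v_r ∈ S (with r minimal) if and only if there exists T ∈ GL_m(D) such that T⁻¹MT is block lower triangular with r zero square diagonal blocks of sizes s_1,...,s_r ≥ 1, where each subdiagonal block A_i (the functions just below the i-th zero block) has columns linearly independent over D as functions. -/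
open MulOpposite

/-- Evaluate every entry of a matrix of functions `S → R` at `v : S`. -/
def evalM {R : Type} [Ring R] {S : Type} {m : ℕ}
    (M : Matrix (Fin m) (Fin m) (S → R)) (v : S) : Matrix (Fin m) (Fin m) R :=
  M.map fun f => f v

/-- The product `M|_{v_r} ⬝ M|_{v_{r-1}} ⬝ ⋯ ⬝ M|_{v_1}` (0-based: `v` indexed `r-1, …, 0`). -/
def evalProd {R : Type} [Ring R] {S : Type} {m r : ℕ}
    (M : Matrix (Fin m) (Fin m) (S → R)) (v : Fin r → S) : Matrix (Fin m) (Fin m) R :=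
  ((List.ofFn fun i => evalM M (v i)).reverse).prod

lemma evalProd_zero {R : Type} [Ring R] {S : Type} {m : ℕ}
    (M : Matrix (Fin m) (Fin m) (S → R)) (v : Fin 0 → S) : evalProd M v = 1 := by
  simp [evalProd]

lemma evalProd_succ {R : Type} [Ring R] {S : Type} {m k : ℕ}
    (M : Matrix (Fin m) (Fin m) (S → R)) (v : Fin (k+1) → S) :
    evalProd M v = evalProd M (fun i => v i.succ) * evalM M (v 0) := by
  rw [evalProd, List.ofFn_succ, List.reverse_cons, List.prod_append]
  simp [evalProd]

lemma evalProd_snoc {R : Type} [Ring R] {S : Type} {m k : ℕ}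
    (M : Matrix (Fin m) (Fin m) (S → R)) (v : Fin (k+1) → S) :
    evalProd M v = evalM M (v (Fin.last k)) * evalProd M (fun i => v i.castSucc) := by
  rw [evalProd, List.ofFn_succ', List.concat_eq_append, List.reverse_append]
  simp [evalProd]

lemma mulVec_mulRight {D : Type} [Ring D] {m : ℕ} (P : Matrix (Fin m) (Fin m) D)
    (u : Fin m → D) (a : D) :
    P.mulVec (fun i => u i * a) = fun i => P.mulVec u i * a := by
  funext i
  simp [Matrix.mulVec, dotProduct, Finset.sum_mul, mul_assoc]

lemma mulVec_single_col {D : Type} [Ring D] {m : ℕ} (P : Matrix (Fin m) (Fin m) D) (j : Fin m) :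
    P.mulVec (Pi.single j 1) = fun i => P i j := by
  classical
  funext i
  simp [Matrix.mulVec, dotProduct, Pi.single_apply, mul_ite]

/-- The subspace of (op-)column vectors killed by every product of `k` evaluations. -/
def Wsub {D : Type} [DivisionRing D] {S : Type} {m : ℕ}
    (M : Matrix (Fin m) (Fin m) (S → D)) (k : ℕ) : Submodule Dᵐᵒᵖ (Fin m → Dᵐᵒᵖ) where
  carrier := {x | ∀ v : Fin k → S, (evalProd M v).mulVec (fun i => (x i).unop) = 0}
  add_mem' := by
    intro x y hx hy v
    have : (fun i => ((x + y) i).unop) = (fun i => (x i).unop) + (fun i => (y i).unop) := by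
      funext i; simp
    rw [this, Matrix.mulVec_add, hx v, hy v, add_zero]
  zero_mem' := by
    intro v
    have : (fun i => ((0 : Fin m → Dᵐᵒᵖ) i).unop) = (0 : Fin m → D) := by funext i; simp
    rw [this, Matrix.mulVec_zero]
  smul_mem' := by
    intro c x hx v
    have : (fun i => ((c • x) i).unop) = fun i => (x i).unop * c.unop := by
      funext i; simp [MulOpposite.unop_smul]
    rw [this, mulVec_mulRight, hx v]
    funext i
    simp

lemma mem_Wsub {D : Type} [DivisionRing D] {S : Type} {m : ℕ}
    (M : Matrix (Fin m) (Fin m) (S → D)) (k : ℕ) (x : Fin m → Dᵐᵒᵖ) :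
    x ∈ Wsub M k ↔ ∀ v : Fin k → S, (evalProd M v).mulVec (fun i => (x i).unop) = 0 :=
  Iff.rfl

lemma mem_Wsub_succ {D : Type} [DivisionRing D] {S : Type} {m : ℕ}
    (M : Matrix (Fin m) (Fin m) (S → D)) (t : ℕ) (x : Fin m → Dᵐᵒᵖ) :
    x ∈ Wsub M (t+1) ↔
      ∀ v : S, (fun i => op ((evalM M v).mulVec (fun j => (x j).unop) i)) ∈ Wsub M t := by
  constructor
  · intro h v
    rw [mem_Wsub]
    intro w
    have h2 : (fun i => (op ((evalM M v).mulVec (fun j => (x j).unop) i)).unop)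
        = (evalM M v).mulVec (fun j => (x j).unop) := by funext i; simp
    rw [h2, Matrix.mulVec_mulVec]
    have h3 := h (Fin.cons v w)
    rw [evalProd_succ] at h3
    simpa [Fin.cons_succ, Fin.cons_zero] using h3
  · intro h v
    rw [evalProd_succ]
    rw [← Matrix.mulVec_mulVec]
    have h2 := h (v 0) (fun i => v i.succ)
    have h3 : (fun i => (op ((evalM M (v 0)).mulVec (fun j => (x j).unop) i)).unop)
        = (evalM M (v 0)).mulVec (fun j => (x j).unop) := by funext i; simp
    rw [h3] at h2
    exact h2

lemma Wsub_mono {D : Type} [DivisionRing D] {S : Type} {m : ℕ}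
    (M : Matrix (Fin m) (Fin m) (S → D)) : Monotone (Wsub M) := by
  apply monotone_nat_of_le_succ
  intro k x hx
  rw [mem_Wsub]
  intro v
  rw [evalProd_snoc, ← Matrix.mulVec_mulVec, hx (fun i => v i.castSucc), Matrix.mulVec_zero]

/-- Translation between a basis of `Fin m → Dᵐᵒᵖ` and an invertible matrix over `D`. -/
lemma basisMatrix {D : Type} [DivisionRing D] {m : ℕ}
    (b : Module.Basis (Fin m) Dᵐᵒᵖ (Fin m → Dᵐᵒᵖ)) :
    ∃ T T' : Matrix (Fin m) (Fin m) D, T * T' = 1 ∧ T' * T = 1 ∧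
      (∀ i j, T i j = (b j i).unop) ∧
      (∀ (y : Fin m → Dᵐᵒᵖ) (i : Fin m),
        (b.repr y i).unop = T'.mulVec (fun l => (y l).unop) i) := by
  classical
  set T : Matrix (Fin m) (Fin m) D := fun i j => (b j i).unop with hT
  set T' : Matrix (Fin m) (Fin m) D := fun i j => (b.repr (Pi.single j 1) i).unop with hT'
  have hexpand : ∀ y : Fin m → Dᵐᵒᵖ, y = ∑ l, y l • Pi.single l (1 : Dᵐᵒᵖ) := by
    intro y; funext p
    rw [Finset.sum_apply]
    simp [Pi.single_apply, mul_ite, Finset.sum_ite_eq]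
  have hrep : ∀ (y : Fin m → Dᵐᵒᵖ) (i : Fin m),
      (b.repr y i).unop = T'.mulVec (fun l => (y l).unop) i := by
    intro y i
    conv_lhs => rw [hexpand y]
    rw [map_sum, Finsupp.finset_sum_apply]
    rw [Finset.unop_sum]
    rw [Matrix.mulVec, dotProduct]
    congr 1
    funext l
    rw [map_smul, Finsupp.smul_apply, smul_eq_mul, unop_mul]
  have hT'T : T' * T = 1 := by
    ext i j
    rw [Matrix.mul_apply]
    have h1 : ∑ l, T' i l * T l j = T'.mulVec (fun l => ((b j) l).unop) i := by
      rw [Matrix.mulVec, dotProduct]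
    rw [h1, ← hrep (b j) i, b.repr_self, Finsupp.single_apply]
    by_cases h : i = j
    · subst h; simp
    · simp [Matrix.one_apply, h, Ne.symm h]
  have hTT' : T * T' = 1 := by
    ext i j
    rw [Matrix.mul_apply]
    have h1 := congrFun (b.sum_repr (Pi.single (M := fun _ => Dᵐᵒᵖ) j 1)) i
    have h2 : ∑ l, T i l * T' l j = MulOpposite.unop (Pi.single (M := fun _ => Dᵐᵒᵖ) j 1 i) := by
      rw [← h1, Finset.sum_apply, Finset.unop_sum]
      exact Finset.sum_congr rfl (fun l _ => by rw [Pi.smul_apply, smul_eq_mul, unop_mul])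
    rw [h2]
    by_cases h : i = j
    · subst h; simp
    · simp [Matrix.one_apply, h, Pi.single_apply, Ne.symm h]
  exact ⟨T, T', hTT', hT'T, fun i j => rfl, hrep⟩

open Matrix MulOpposite Module Submodule

lemma flagBasis {K : Type} [DivisionRing K] {m r : ℕ}
    (W : ℕ → Submodule K (Fin m → K))
    (hmono : ∀ k, W k ≤ W (k+1)) (hbot : W 0 = ⊥) (htop : W r = ⊤)
    (hstrict : ∀ k < r, W k ≠ W (k+1)) (hr : 0 < r) :
    ∃ (b : Basis (Fin m) K (Fin m → K)) (f : Fin m → ℕ),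
      (∀ i, f i < r) ∧ Monotone f ∧ (∀ k < r, ∃ i, f i = k) ∧
      (∀ i, b i ∈ W (f i + 1)) ∧
      (∀ (k : ℕ) (x : Fin m → K), x ∈ W k → ∀ i, k ≤ f i → b.repr x i = 0) := by
  classical
  -- complements
  choose Cf hCf using fun k => Submodule.exists_isCompl (W k)
  set C : ℕ → Submodule K (Fin m → K) := fun k => Cf k ⊓ W (k+1) with hC
  have hsup : ∀ k, W k ⊔ C k = W (k+1) := by
    intro k
    have := sup_inf_assoc_of_le (x := W k) (Cf k) (z := W (k+1)) (hmono k)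
    rw [hC]
    rw [← this, (hCf k).sup_eq_top, top_inf_eq]
  have hdisj : ∀ k, W k ⊓ C k = ⊥ := by
    intro k
    apply le_bot_iff.mp
    calc W k ⊓ C k ≤ W k ⊓ Cf k := inf_le_inf_left _ inf_le_left
    _ = ⊥ := (hCf k).inf_eq_bot
  set n : ℕ → ℕ := fun k => finrank K (W k) with hn
  set d : ℕ → ℕ := fun k => finrank K (C k) with hd
  have hnd : ∀ k, n k + d k = n (k+1) := by
    intro k
    have h1 := Submodule.finrank_sup_add_finrank_inf_eq (W k) (C k)
    rw [hsup k, hdisj k, finrank_bot, add_zero] at h1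
    exact h1.symm
  have hnmono : Monotone n := monotone_nat_of_le_succ (fun k => by
    rw [← hnd k]; omega)
  have hdpos : ∀ k < r, 0 < d k := by
    intro k hk
    rcases Nat.eq_zero_or_pos (d k) with h | h
    · exfalso
      have : C k = ⊥ := Submodule.finrank_eq_zero.mp h
      exact hstrict k hk (by rw [← hsup k, this, sup_bot_eq])
    · exact h
  have hn0 : n 0 = 0 := by rw [hn]; simp [hbot]
  have hpim : finrank K (Fin m → K) = m := by rw [finrank_pi K, Fintype.card_fin]
  have hnr : n r = m := by
    rw [hn]
    show finrank K (W r) = m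
    rw [htop, finrank_top]
    exact hpim
  -- block index
  set blkN : ℕ → ℕ := fun i => Nat.findGreatest (fun k => n k ≤ i) (r-1) with hblkN
  have hble : ∀ i : ℕ, n (blkN i) ≤ i := by
    intro i
    exact Nat.findGreatest_spec (P := fun k => n k ≤ i) (Nat.zero_le _) (show n 0 ≤ i by omega)
  have hblt : ∀ i, blkN i ≤ r - 1 := by
    intro i
    exact Nat.findGreatest_le (P := fun k => n k ≤ i) _
  have hblr : ∀ i, blkN i < r := fun i => lt_of_le_of_lt (hblt i) (by omega)
  have hub : ∀ i, i < m → i < n (blkN i + 1) := by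
    intro i him
    by_contra h
    push_neg at h
    rcases Nat.lt_or_ge (blkN i) (r-1) with h2 | h2
    · have h3 : blkN i + 1 ≤ blkN i :=
        Nat.le_findGreatest (P := fun k => n k ≤ i) (by omega) h
      omega
    · have h5 : blkN i = r - 1 := le_antisymm (hblt i) h2
      have h6 : n r ≤ i := by
        rw [show r = (r-1)+1 by omega, ← h5]
        exact h
      omega
  have hblmono : Monotone blkN := by
    intro i j hij
    exact Nat.findGreatest_mono (P := fun k => n k ≤ i) (Q := fun k => n k ≤ j)
      (fun t ht => le_trans ht hij) (le_refl _)
  have hfg : ∀ k < r, ∀ t, n k + t < n (k+1) → blkN (n k + t) = k := by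
    intro k hk t ht
    have h1 : k ≤ blkN (n k + t) := by
      exact Nat.le_findGreatest (P := fun j => n j ≤ n k + t) (by omega) (Nat.le_add_right _ _)
    have h2 : blkN (n k + t) ≤ k := by
      by_contra h
      push_neg at h
      have h5 : n (k+1) ≤ n (blkN (n k + t)) := hnmono (by omega)
      have h6 := hble (n k + t)
      omega
    omega
  -- basis of each complement
  set β : ∀ k, Basis (Fin (d k)) K ↥(C k) := fun k => Module.finBasis K ↥(C k) with hβ
  have hltd : ∀ i : Fin m, (i : ℕ) - n (blkN i) < d (blkN i) := by
    intro i
    have h1 := hble (i : ℕ)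
    have h2 := hub (i : ℕ) i.isLt
    have h3 := hnd (blkN (i : ℕ))
    omega
  set B : Fin m → (Fin m → K) := fun i => ((β (blkN i)) ⟨(i : ℕ) - n (blkN i), hltd i⟩ : Fin m → K) with hB
  have hBval : ∀ (i : Fin m) (k : ℕ) (hk : blkN ((i : Fin m) : ℕ) = k) (ht : ((i : Fin m) : ℕ) - n k < d k),
      B i = ((β k) ⟨((i : Fin m) : ℕ) - n k, ht⟩ : Fin m → K) := by
    intro i k hk ht
    subst hk
    rfl
  have hBmem : ∀ i : Fin m, B i ∈ C (blkN ((i : Fin m) : ℕ)) := fun i => Submodule.coe_mem _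
  -- spanning
  have hCspan : ∀ k, C k = Submodule.span K (Set.range (fun t => ((β k t : ↥(C k)) : Fin m → K))) := by
    intro k
    have h1 : (Set.range (fun t => ((β k t : ↥(C k)) : Fin m → K))) = (C k).subtype '' (Set.range (β k)) := by
      rw [← Set.range_comp]; rfl
    rw [h1, Submodule.span_image, Basis.span_eq, Submodule.map_subtype_top]
  have hCle : ∀ k < r, C k ≤ Submodule.span K (B '' {i : Fin m | blkN ((i : Fin m) : ℕ) < k + 1}) := by
    intro k hk
    rw [hCspan k]
    apply Submodule.span_le.mpr
    rintro x ⟨t, rfl⟩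
    apply Submodule.subset_span
    have ht' : n k + (t : ℕ) < n (k+1) := by have := hnd k; have := t.isLt; omega
    have him : n k + (t : ℕ) < m := by
      have h2 : n (k+1) ≤ n r := hnmono (by omega)
      omega
    have hbk : blkN ((⟨n k + (t : ℕ), him⟩ : Fin m) : ℕ) = k := hfg k hk (t : ℕ) ht'
    refine ⟨⟨n k + (t : ℕ), him⟩, ?_, ?_⟩
    · simp only [Set.mem_setOf_eq]
      rw [hbk]
      omega
    · rw [hBval _ k hbk (by show n k + (t : ℕ) - n k < d k; have := t.isLt; omega)]
      congr 1
      ext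
      simp
  have hWspan : ∀ k, k ≤ r → W k ≤ Submodule.span K (B '' {i : Fin m | blkN ((i : Fin m) : ℕ) < k}) := by
    intro k
    induction k with
    | zero => intro _; rw [hbot]; exact bot_le
    | succ k ih =>
      intro hk1
      rw [← hsup k]
      apply sup_le
      · refine le_trans (ih (by omega)) (Submodule.span_mono (Set.image_mono ?_))
        intro i hi
        simp only [Set.mem_setOf_eq] at hi ⊢
        omega
      · exact hCle k (by omega)
  have hspan : ⊤ ≤ Submodule.span K (Set.range B) := by
    rw [← htop]
    refine le_trans (hWspan r (le_refl r)) (Submodule.span_mono ?_)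
    exact Set.image_subset_range _ _
  have hcard : Fintype.card (Fin m) = finrank K (Fin m → K) := by
    rw [Fintype.card_fin, hpim]
  set b : Basis (Fin m) K (Fin m → K) := basisOfTopLeSpanOfCardEqFinrank B hspan hcard with hb
  have hbcoe : ⇑b = B := coe_basisOfTopLeSpanOfCardEqFinrank B hspan hcard
  -- repr vanishing on spans
  have hrepr : ∀ (s : Set (Fin m)) (x : Fin m → K), x ∈ Submodule.span K (B '' s) →
      ∀ i ∉ s, b.repr x i = 0 := by
    intro s x hx i hi
    induction hx using Submodule.span_induction with
    | mem y hy =>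
      obtain ⟨i', hi', rfl⟩ := hy
      rw [← hbcoe, b.repr_self]
      rw [Finsupp.single_apply]
      have : i' ≠ i := fun h => hi (h ▸ hi')
      simp [this]
    | zero => simp
    | add y z _ _ hy hz => rw [map_add]; simp [hy, hz]
    | smul a y _ hy => rw [_root_.map_smul]; simp [hy]
  refine ⟨b, fun i => blkN ((i : Fin m) : ℕ), fun i => hblr _, ?_, ?_, ?_, ?_⟩
  · intro i j hij
    exact hblmono hij
  · intro k hk
    have him : n k < m := by
      have h1 : n k < n (k+1) := by have := hnd k; have := hdpos k hk; omega
      have h2 : n (k+1) ≤ n r := hnmono (by omega)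
      omega
    refine ⟨⟨n k, him⟩, ?_⟩
    show blkN ((⟨n k, him⟩ : Fin m) : ℕ) = k
    rw [show ((⟨n k, him⟩ : Fin m) : ℕ) = n k + 0 by simp]
    exact hfg k hk 0 (by have := hnd k; have := hdpos k hk; omega)
  · intro i
    rw [hbcoe]
    refine le_trans ?_ (le_of_eq (hsup (blkN ((i : Fin m) : ℕ)))) (hBmem i)
    exact le_sup_right
  · intro k x hx i hki
    have hki' : k ≤ blkN ((i : Fin m) : ℕ) := hki
    have hkr : k ≤ r := by have := hblr ((i : Fin m) : ℕ); omega
    have := hWspan k hkr hx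
    exact hrepr _ x this i (by simp only [Set.mem_setOf_eq]; omega)
theorem stmt11 {D : Type} [DivisionRing D] {S : Type} {m r : ℕ} (hm : 1 ≤ m)
    (M : Matrix (Fin m) (Fin m) (S → D)) :
    ((∀ v : Fin r → S, evalProd M v = 0) ∧
      ∀ r' < r, ¬ (∀ v : Fin r' → S, evalProd M v = 0)) ↔
    ∃ T T' : Matrix (Fin m) (Fin m) D, T * T' = 1 ∧ T' * T = 1 ∧
      ∃ blk : Fin m → Fin r, Monotone blk ∧
        (∀ k : Fin r, ∃ i, blk i = k) ∧
        (∀ (v : S) (i j : Fin m), blk i ≤ blk j → (T' * evalM M v * T) i j = 0) ∧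
        (∀ (k : ℕ), k + 1 < r → ∀ c : Fin m → D,
          (∀ (v : S) (i : Fin m), (blk i : ℕ) = k + 1 →
            (∑ j ∈ Finset.univ.filter (fun j => (blk j : ℕ) = k),
              (T' * evalM M v * T) i j * c j) = 0) →
          ∀ j : Fin m, (blk j : ℕ) = k → c j = 0) := by
  classical
  constructor
  · rintro ⟨hall, hmin⟩
    have hr : 0 < r := by
      rcases Nat.eq_zero_or_pos r with hr0 | hr
      · exfalso
        subst hr0
        have h1 := hall Fin.elim0
        rw [evalProd_zero] at h1
        have h2 := congrFun (congrFun h1 ⟨0, hm⟩) ⟨0, hm⟩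
        rw [Matrix.one_apply_eq] at h2
        exact one_ne_zero h2
      · exact hr
    -- the flag of kernels
    have hW0 : Wsub M 0 = ⊥ := by
      apply le_antisymm
      · intro x hx
        have h1 := hx Fin.elim0
        rw [evalProd_zero, Matrix.one_mulVec] at h1
        have hx0 : x = 0 := by
          funext i
          have h2 := congrFun h1 i
          simpa [MulOpposite.unop_eq_zero_iff] using h2
        simp [hx0]
      · exact bot_le
    have hWtop : Wsub M r = ⊤ := by
      apply le_antisymm le_top
      intro x _ v
      rw [hall v, Matrix.zero_mulVec]
    have hWne : ∀ k < r, Wsub M k ≠ ⊤ := by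
      intro k hk htopk
      apply hmin k hk
      intro v
      ext i j
      have h2 : (fun l' => MulOpposite.op (Pi.single (M := fun _ => D) j 1 l')) ∈ Wsub M k := by
        rw [htopk]; trivial
      have h3 := h2 v
      have h4 : (evalProd M v).mulVec (Pi.single j 1) = 0 := by
        rw [show (Pi.single (M := fun _ => D) j 1) =
          (fun l => ((fun l' => MulOpposite.op (Pi.single (M := fun _ => D) j 1 l')) l).unop) by
            funext l; simp]
        exact h3
      rw [mulVec_single_col] at h4
      have h5 := congrFun h4 i
      simpa using h5
    have hstep : ∀ t, Wsub M t = Wsub M (t+1) → Wsub M (t+1) = Wsub M (t+2) := by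
      intro t ht
      apply le_antisymm (Wsub_mono M (by omega))
      intro x hx
      rw [mem_Wsub_succ]
      intro v
      have h1 := (mem_Wsub_succ M (t+1) x).mp hx v
      rw [← ht] at h1
      exact h1
    have hstrict : ∀ k < r, Wsub M k ≠ Wsub M (k+1) := by
      intro k hk heq
      have hprop : ∀ j, Wsub M (k+j) = Wsub M (k+j+1) := by
        intro j
        induction j with
        | zero => exact heq
        | succ j ih => exact hstep (k+j) ih
      have hchain : ∀ j, Wsub M (k+j) = Wsub M k := by
        intro j
        induction j with
        | zero => rfl
        | succ j ih => rw [← ih]; exact (hprop j).symm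
      have h6 := hchain (r - k)
      rw [show k + (r - k) = r by omega, hWtop] at h6
      exact hWne k hk h6.symm
    obtain ⟨b0, f, hflt, hfmono, hfsurj, hfmem, hfvan⟩ :=
      flagBasis (Wsub M) (fun k => Wsub_mono M (Nat.le_succ k)) hW0 hWtop hstrict hr
    set b : Basis (Fin m) Dᵐᵒᵖ (Fin m → Dᵐᵒᵖ) := b0.reindex Fin.revPerm with hbdef
    have hbapp : ∀ j, b j = b0 (Fin.rev j) := by
      intro j
      rw [hbdef, Basis.reindex_apply]
      congr 1
    have hbrepr : ∀ (x : Fin m → Dᵐᵒᵖ) (i : Fin m), b.repr x i = b0.repr x (Fin.rev i) := by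
      intro x i
      rw [hbdef, Basis.repr_reindex_apply]
      congr 1
    obtain ⟨T, T', hTT', hT'T, hTent, hrep⟩ := basisMatrix b
    set blk : Fin m → Fin r := fun i => ⟨r - 1 - f (Fin.rev i), by have := hflt (Fin.rev i); omega⟩
      with hblk
    have hblkval : ∀ i, (blk i : ℕ) = r - 1 - f (Fin.rev i) := fun i => rfl
    have hfval : ∀ i, f (Fin.rev i) = r - 1 - (blk i : ℕ) := by
      intro i
      have h1 := hflt (Fin.rev i)
      rw [hblkval]
      omega
    have hbmem : ∀ j, b j ∈ Wsub M (f (Fin.rev j) + 1) := by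
      intro j
      rw [hbapp j]
      exact hfmem (Fin.rev j)
    have hsand : ∀ (A : Matrix (Fin m) (Fin m) D) (c : Fin m → D),
        (T' * A * T).mulVec c = T'.mulVec (A.mulVec (T.mulVec c)) := by
      intro A c
      rw [Matrix.mulVec_mulVec, Matrix.mulVec_mulVec, Matrix.mul_assoc]
    have hentry : ∀ (A : Matrix (Fin m) (Fin m) D) (i j : Fin m),
        (T' * A * T) i j =
          ((b.repr (fun i' => MulOpposite.op (A.mulVec (fun l => ((b j) l).unop) i'))) i).unop := by
      intro A i j
      have h1 : (T' * A * T) i j = ((T' * A * T).mulVec (Pi.single j 1)) i := by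
        rw [mulVec_single_col]
      rw [h1, hsand]
      have hcol : T.mulVec (Pi.single j 1) = (fun l => ((b j) l).unop) := by
        rw [mulVec_single_col]
        funext l
        rw [hTent]
      rw [hcol, hrep (fun i' => MulOpposite.op (A.mulVec (fun l => ((b j) l).unop) i')) i]
      have harg : (fun l => (MulOpposite.op (A.mulVec (fun l' => ((b j) l').unop) l)).unop)
          = A.mulVec (fun l' => ((b j) l').unop) := by
        funext l; simp
      rw [harg]
    refine ⟨T, T', hTT', hT'T, blk, ?_, ?_, ?_, ?_⟩
    · intro i j hij
      have h1 : Fin.rev j ≤ Fin.rev i := Fin.rev_le_rev.mpr hij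
      have h2 := hfmono h1
      rw [Fin.le_def, hblkval, hblkval]
      omega
    · intro k
      obtain ⟨i, hi⟩ := hfsurj (r - 1 - (k : ℕ)) (by have := k.isLt; omega)
      refine ⟨Fin.rev i, ?_⟩
      apply Fin.ext
      rw [hblkval, Fin.rev_rev, hi]
      have := k.isLt
      omega
    · intro v i j hij
      rw [hentry, hbrepr, MulOpposite.unop_eq_zero_iff]
      apply hfvan (f (Fin.rev j)) _ ((mem_Wsub_succ M _ (b j)).mp (hbmem j) v) (Fin.rev i)
      rw [Fin.le_def, hblkval, hblkval] at hij
      have h1 := hflt (Fin.rev i)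
      have h2 := hflt (Fin.rev j)
      omega
    · intro k hk c H j hj
      set c' : Fin m → D := fun l => if (blk l : ℕ) = k then c l else 0 with hc'
      set x : Fin m → Dᵐᵒᵖ := fun i => MulOpposite.op ((T.mulVec c') i) with hx
      have hxsum : x = ∑ l, MulOpposite.op (c' l) • b l := by
        funext i
        rw [Finset.sum_apply]
        show MulOpposite.op ((T.mulVec c') i) = _
        rw [Matrix.mulVec, dotProduct, Finset.op_sum]
        refine Finset.sum_congr rfl (fun l _ => ?_)
        rw [hTent, MulOpposite.op_mul, MulOpposite.op_unop]
        rfl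
      have hxmem : x ∈ Wsub M (r - k) := by
        rw [hxsum]
        apply Submodule.sum_mem
        intro l _
        by_cases hl : (blk l : ℕ) = k
        · apply Submodule.smul_mem
          have h1 := hbmem l
          have h2 : f (Fin.rev l) + 1 = r - k := by
            rw [hfval, hl]
            omega
          rwa [h2] at h1
        · have h3 : c' l = 0 := by rw [hc']; simp [hl]
          rw [h3]
          simp
      have hunvx : (fun l => (x l).unop) = T.mulVec c' := by
        funext l
        rw [hx]
        simp
      have hactx : ∀ v : S,
          (fun i => MulOpposite.op ((evalM M v).mulVec (fun l => (x l).unop) i)) ∈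
            Wsub M (r - k - 2) := by
        intro v
        have hy : (fun i => MulOpposite.op ((evalM M v).mulVec (fun l => (x l).unop) i)) ∈
            Wsub M (r - k - 1) := by
          refine (mem_Wsub_succ M (r-k-1) x).mp ?_ v
          rw [show (r-k-1)+1 = r-k by omega]
          exact hxmem
        set y : Fin m → Dᵐᵒᵖ :=
          fun i => MulOpposite.op ((evalM M v).mulVec (fun l => (x l).unop) i) with hydef
        have hyrep : ∀ i, (blk i : ℕ) ≤ k + 1 → b.repr y i = 0 := by
          intro i hi
          rcases Nat.lt_or_ge (blk i : ℕ) (k+1) with h1 | h1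
          · rw [hbrepr]
            apply hfvan (r-k-1) _ hy (Fin.rev i)
            rw [hfval]
            have h2 := (blk i).isLt
            omega
          · have h2 : (blk i : ℕ) = k+1 := by omega
            have h3 : (b.repr y i).unop = ((T' * evalM M v * T).mulVec c') i := by
              rw [hrep y i, hsand]
              have h4 : (fun l => (y l).unop) = (evalM M v).mulVec (T.mulVec c') := by
                funext l
                rw [hydef]
                simp only [MulOpposite.unop_op]
                rw [hunvx]
              rw [h4]
            have h5 : ((T' * evalM M v * T).mulVec c') i = 0 := by
              have hH := H v i h2
              rw [Finset.sum_filter] at hH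
              simp only [Matrix.mulVec, dotProduct]
              rw [← hH]
              refine Finset.sum_congr rfl (fun l _ => ?_)
              rw [hc']
              by_cases h6 : (blk l : ℕ) = k <;> simp [h6]
            exact (MulOpposite.unop_eq_zero_iff _).mp (h3.trans h5)
        rw [← b.sum_repr y]
        apply Submodule.sum_mem
        intro i _
        by_cases hik : (blk i : ℕ) ≤ k + 1
        · rw [hyrep i hik]
          simp
        · apply Submodule.smul_mem
          have h1 := hbmem i
          refine Wsub_mono M ?_ h1
          rw [hfval]
          have h2 := (blk i).isLt
          omega
      have hxW : x ∈ Wsub M (r - k - 1) := by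
        rw [show r-k-1 = (r-k-2)+1 by omega]
        exact (mem_Wsub_succ M (r-k-2) x).mpr hactx
      have h6 : b.repr x j = 0 := by
        rw [hbrepr]
        apply hfvan (r-k-1) _ hxW (Fin.rev j)
        rw [hfval, hj]
        omega
      have h7 : b.repr x j = MulOpposite.op (c' j) := by
        rw [hxsum, map_sum, Finsupp.finset_sum_apply]
        have h8 : ∀ l, (b.repr (MulOpposite.op (c' l) • b l)) j
            = if j = l then MulOpposite.op (c' l) else 0 := by
          intro l
          rw [_root_.map_smul, Finsupp.smul_apply, b.repr_self, Finsupp.single_apply]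
          by_cases h : l = j
          · subst h; simp
          · simp [h, Ne.symm h]
        rw [Finset.sum_congr rfl (fun l _ => h8 l), Finset.sum_ite_eq]
        simp
      have h9 : c' j = 0 := by
        have h10 := h7.symm.trans h6
        simpa using h10
      have h9' : (if (blk j : ℕ) = k then c j else 0) = 0 := h9
      rwa [if_pos hj] at h9'
  · rintro ⟨T, T', hTT', hT'T, blk, hmono, hsurj, hzero, hind⟩
    have hr : 0 < r := Nat.lt_of_le_of_lt (Nat.zero_le _) (blk ⟨0, by omega⟩).isLt
    have hX : ∀ X : Matrix (Fin m) (Fin m) D, T * (T' * X) = X := fun X => by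
      rw [← Matrix.mul_assoc, hTT', Matrix.one_mul]
    have hsand2 : ∀ A B : Matrix (Fin m) (Fin m) D,
        T' * (A * B) * T = (T' * A * T) * (T' * B * T) := by
      intro A B
      simp only [Matrix.mul_assoc]
      rw [hX]
    have hzero' : ∀ (v : S) (i j : Fin m), (blk i : ℕ) ≤ (blk j : ℕ) →
        (T' * evalM M v * T) i j = 0 := fun v i j h => hzero v i j (Fin.le_def.mpr h)
    have Z : ∀ (k : ℕ) (v : Fin k → S) (i j : Fin m),
        (blk i : ℕ) < (blk j : ℕ) + k → (T' * evalProd M v * T) i j = 0 := by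
      intro k
      induction k with
      | zero =>
        intro v i j hij
        rw [evalProd_zero, Matrix.mul_one, hT'T]
        have hne : i ≠ j := by
          intro h
          subst h
          omega
        exact Matrix.one_apply_ne hne
      | succ k ih =>
        intro v i j hij
        rw [evalProd_snoc, hsand2, Matrix.mul_apply]
        apply Finset.sum_eq_zero
        intro l _
        rcases Nat.lt_or_ge (blk l : ℕ) ((blk j : ℕ) + k) with h1 | h1
        · rw [ih _ l j h1, mul_zero]
        · rw [hzero' _ i l (by omega), zero_mul]
    have hall : ∀ v : Fin r → S, evalProd M v = 0 := by
      intro v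
      have h1 : T' * evalProd M v * T = 0 := by
        ext i j
        exact Z r v i j (by have := (blk i).isLt; omega)
      have h2 : evalProd M v = T * (T' * evalProd M v * T) * T' := by
        simp only [Matrix.mul_assoc, hTT', Matrix.mul_one]
        rw [hX]
      rw [h2, h1, Matrix.mul_zero, Matrix.zero_mul]
    have hup : ∀ s : ℕ, (∀ v : Fin s → S, evalProd M v = 0) →
        ∀ v : Fin (s+1) → S, evalProd M v = 0 := by
      intro s hs v
      rw [evalProd_snoc, hs (fun i => v i.castSucc), Matrix.mul_zero]
    obtain ⟨j0, hj0⟩ := hsurj ⟨0, hr⟩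
    have hkey : ∀ k, k < r → ∃ v : Fin k → S,
        (∃ j, (blk j : ℕ) = k ∧ ((T' * evalProd M v * T).mulVec (Pi.single j0 1)) j ≠ 0) ∧
        (∀ j, ((T' * evalProd M v * T).mulVec (Pi.single j0 1)) j ≠ 0 → k ≤ (blk j : ℕ)) := by
      intro k
      induction k with
      | zero =>
        intro _
        refine ⟨Fin.elim0, ⟨j0, ?_, ?_⟩, fun j _ => Nat.zero_le _⟩
        · rw [hj0]
        · rw [evalProd_zero, Matrix.mul_one, hT'T, Matrix.one_mulVec]
          simp
      | succ k ih =>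
        intro hk1
        obtain ⟨v, ⟨j1, hj1, hc1⟩, hsupp⟩ := ih (by omega)
        set c : Fin m → D := (T' * evalProd M v * T).mulVec (Pi.single j0 1) with hcdef
        have hex : ∃ (v0 : S) (i0 : Fin m), (blk i0 : ℕ) = k + 1 ∧
            (∑ j ∈ Finset.univ.filter (fun j => (blk j : ℕ) = k),
              (T' * evalM M v0 * T) i0 j * c j) ≠ 0 := by
          by_contra hcon
          push_neg at hcon
          exact hc1 (hind k hk1 c (fun v0 i hi => hcon v0 i hi) j1 hj1)
        obtain ⟨v0, i0, hi0, hne⟩ := hex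
        have hsplit : evalProd M (Fin.snoc v v0) = evalM M v0 * evalProd M v := by
          have e1 : (fun i : Fin k => Fin.snoc (α := fun _ => S) v v0 i.castSucc) = v := by
            funext i
            rw [Fin.snoc_castSucc]
          rw [evalProd_snoc, Fin.snoc_last, e1]
        have hcnew : (T' * evalProd M (Fin.snoc v v0) * T).mulVec (Pi.single j0 1)
            = (T' * evalM M v0 * T).mulVec c := by
          rw [hsplit, hsand2, ← Matrix.mulVec_mulVec, ← hcdef]
        refine ⟨Fin.snoc v v0, ⟨i0, hi0, ?_⟩, ?_⟩
        · rw [hcnew]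
          have hval : ((T' * evalM M v0 * T).mulVec c) i0
              = ∑ j ∈ Finset.univ.filter (fun j => (blk j : ℕ) = k),
                  (T' * evalM M v0 * T) i0 j * c j := by
            rw [Finset.sum_filter]
            simp only [Matrix.mulVec, dotProduct]
            refine Finset.sum_congr rfl (fun l _ => ?_)
            by_cases hl : (blk l : ℕ) = k
            · simp [hl]
            · simp only [hl, if_false]
              by_cases hcl : c l = 0
              · rw [hcl, mul_zero]
              · have h5 := hsupp l hcl
                rw [hzero' v0 i0 l (by omega), zero_mul]
          rw [hval]
          exact hne
        · intro j hj
          rw [hcnew] at hj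
          by_contra hb
          push_neg at hb
          apply hj
          simp only [Matrix.mulVec, dotProduct]
          apply Finset.sum_eq_zero
          intro l _
          by_cases hcl : c l = 0
          · rw [hcl, mul_zero]
          · beta_reduce
            rw [hzero' v0 j l (by have := hsupp l hcl; omega), zero_mul]
    refine ⟨hall, ?_⟩
    intro r' hr' hallr'
    obtain ⟨v, ⟨j, hj, hcj⟩, _⟩ := hkey (r-1) (by omega)
    have hprop : ∀ s, r' ≤ s → ∀ v : Fin s → S, evalProd M v = 0 := by
      intro s
      induction s with
      | zero =>
        intro hs
        have hs0 : r' = 0 := by omega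
        subst hs0
        exact hallr'
      | succ s ih =>
        intro hs
        rcases Nat.lt_or_ge r' (s+1) with h | h
        · exact hup s (ih (by omega))
        · have hs1 : r' = s+1 := by omega
          subst hs1
          exact hallr'
    have h0 := hprop (r-1) (by omega) v
    apply hcj
    rw [h0, Matrix.mul_zero, Matrix.zero_mul, Matrix.zero_mulVec]
    rfl
end

section
/- Let K be a field of characteristic zero and H ∈ K[x_1,...,x_n]ⁿ such that x + H is a quasi-translation (i.e., JH · H = 0, equivalently x − H is the inverse of x + H). Then (JH)·(JH)|_{x=y} = 0 (for a fresh tuple y of indeterminates) if and only if (JH)·H(y) = 0. -/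
open MvPolynomial

section Aux

variable {K : Type} {σ : Type*} [CommRing K]

lemma coeff_pderiv (i : σ) (f : MvPolynomial σ K) (m : σ →₀ ℕ) :
    coeff m (pderiv i f) = (m i + 1 : ℕ) * coeff (m + Finsupp.single i 1) f := by
  classical
  induction f using MvPolynomial.induction_on' with
  | add p q hp hq => simp [hp, hq, mul_add]
  | monomial s a =>
    rw [pderiv_monomial, coeff_monomial, coeff_monomial]
    by_cases h : s = m + Finsupp.single i 1
    · subst h
      have h1 : m + Finsupp.single i 1 - Finsupp.single i 1 = m := add_tsub_cancel_right _ _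
      rw [if_pos h1]
      simp [Finsupp.add_apply, mul_comm]
    · rw [if_neg h, mul_zero]
      by_cases h2 : s - Finsupp.single i 1 = m
      · rw [if_pos h2]
        by_cases hsi : s i = 0
        · simp [hsi]
        · exfalso
          apply h
          ext j
          rw [← h2]
          simp only [Finsupp.add_apply, Finsupp.tsub_apply]
          by_cases hj : j = i
          · subst hj; simp; omega
          · simp [Finsupp.single_eq_of_ne' (Ne.symm hj)]
      · rw [if_neg h2]

lemma not_mem_vars_of_pderiv_eq_zero {K : Type} [Field K] [CharZero K] {σ : Type*} {i : σ} {f : MvPolynomial σ K}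
    (h : pderiv i f = 0) : i ∉ f.vars := by
  classical
  intro hi
  rw [mem_vars] at hi
  obtain ⟨d, hd, hdi⟩ := hi
  rw [Finsupp.mem_support_iff] at hdi
  have key := coeff_pderiv i f (d - Finsupp.single i 1)
  rw [h] at key
  have h1 : (d - Finsupp.single i 1) + Finsupp.single i 1 = d := by
    ext j
    simp only [Finsupp.add_apply, Finsupp.tsub_apply]
    by_cases hj : j = i
    · subst hj; simp; omega
    · simp [Finsupp.single_eq_of_ne' (Ne.symm hj)]
  have h2 : ((d - Finsupp.single i 1 : _ →₀ ℕ)) i + 1 = d i := by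
    simp only [Finsupp.tsub_apply, Finsupp.single_eq_same]
    omega
  rw [h1, h2] at key
  simp only [coeff_zero] at key
  rcases mul_eq_zero.mp key.symm with h' | h'
  · exact hdi (Nat.cast_eq_zero.mp h')
  · exact (mem_support_iff.mp hd) h'
  
end Aux

/-- `(JH)|_{x=x}`: the Jacobian, viewed in the larger ring with variables `x ⊕ y`. -/
noncomputable def jacX {K : Type} [CommRing K] {n : ℕ}
    (H : Fin n → MvPolynomial (Fin n) K) :
    Matrix (Fin n) (Fin n) (MvPolynomial (Fin n ⊕ Fin n) K) :=
  (jac H).map (rename Sum.inl)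

/-- `(JH)|_{x=y}`: the Jacobian with the fresh tuple `y` substituted for `x`. -/
noncomputable def jacY {K : Type} [CommRing K] {n : ℕ}
    (H : Fin n → MvPolynomial (Fin n) K) :
    Matrix (Fin n) (Fin n) (MvPolynomial (Fin n ⊕ Fin n) K) :=
  (jac H).map (rename Sum.inr)

/-- `H(y)`: the map `H` with the fresh tuple `y` substituted for `x`. -/
noncomputable def HY {K : Type} [CommRing K] {n : ℕ}
    (H : Fin n → MvPolynomial (Fin n) K) : Fin n → MvPolynomial (Fin n ⊕ Fin n) K :=
  fun i => rename Sum.inr (H i)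

lemma pderiv_inr_rename_inl {K : Type} [CommRing K] {n : ℕ} (j : Fin n)
    (p : MvPolynomial (Fin n) K) :
    pderiv (Sum.inr j : Fin n ⊕ Fin n) (rename Sum.inl p) = 0 := by
  apply pderiv_eq_zero_of_notMem_vars
  intro hmem
  obtain ⟨i, _, hi⟩ := mem_vars_rename _ _ hmem
  exact Sum.inl_ne_inr hi

lemma key_deriv {K : Type} [CommRing K] {n : ℕ} (H : Fin n → MvPolynomial (Fin n) K)
    (i j : Fin n) :
    pderiv (Sum.inr j : Fin n ⊕ Fin n) ((jacX H).mulVec (HY H) i) = (jacX H * jacY H) i j := by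
  rw [Matrix.mulVec, Matrix.mul_apply]
  simp only [dotProduct]
  rw [map_sum]
  refine Finset.sum_congr rfl fun k _ => ?_
  simp only [jacX, jacY, HY, jac, Matrix.map_apply, Matrix.of_apply]
  rw [pderiv_mul, pderiv_inr_rename_inl, zero_mul, zero_add,
    pderiv_rename Sum.inr_injective]

theorem stmt15 {K : Type} [Field K] [CharZero K] {n : ℕ}
    (H : Fin n → MvPolynomial (Fin n) K)
    (hq : (jac H).mulVec H = 0) :
    jacX H * jacY H = 0 ↔ (jacX H).mulVec (HY H) = 0 := by
  constructor
  · intro hmul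
    funext i
    -- all y-derivatives vanish
    have hder : ∀ j, pderiv (Sum.inr j : Fin n ⊕ Fin n) ((jacX H).mulVec (HY H) i) = 0 := by
      intro j
      rw [key_deriv, hmul]
      rfl
    -- hence only inl variables
    have hvars : ↑((jacX H).mulVec (HY H) i).vars ⊆ Set.range (Sum.inl : Fin n → Fin n ⊕ Fin n) := by
      intro v hv
      cases v with
      | inl a => exact ⟨a, rfl⟩
      | inr b => exact absurd hv (not_mem_vars_of_pderiv_eq_zero (hder b))
    obtain ⟨g, hg⟩ := exists_rename_eq_of_vars_subset_range _ _ Sum.inl_injective hvars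
    -- evaluate at y = x
    have hdiag : (aeval (Sum.elim X X : Fin n ⊕ Fin n → MvPolynomial (Fin n) K))
        ((jacX H).mulVec (HY H) i) = (jac H).mulVec H i := by
      rw [Matrix.mulVec, Matrix.mulVec]
      simp only [dotProduct]
      rw [map_sum]
      refine Finset.sum_congr rfl fun k _ => ?_
      rw [map_mul]
      simp only [jacX, HY, Matrix.map_apply]
      rw [aeval_rename, aeval_rename]
      simp [Function.comp_def, aeval_X_left_apply]
    have hg0 : g = 0 := by
      have := hdiag
      rw [← hg, aeval_rename] at this
      simp only [Function.comp_def, Sum.elim_inl] at this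
      rw [hq] at this
      simpa [aeval_X_left_apply] using this
    rw [← hg, hg0, map_zero]
    rfl
  · intro hvec
    funext i j
    rw [← key_deriv, hvec]
    simp
end

section
/- Let K be a field of characteristic zero and x + H a quasi-translation over K. If there exists T ∈ GL_n(K) and 0 ≤ s < n such that for Ĥ := T⁻¹H(Tx) one has Ĥ_i = 0 for all i ≤ s and Ĥ_i ∈ K[x_1,...,x_s] for all i > s, then (JH)·(JH)|_{x=y} = 0, i.e., JH has strong nilpotency index at most two. -/
open MvPolynomial

/-- Chain rule for `pderiv` and `aeval`. -/
lemma aux_chain {K : Type} [CommRing K] {n m : ℕ}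
    (g : Fin n → MvPolynomial (Fin m) K) (j : Fin m) (p : MvPolynomial (Fin n) K) :
    pderiv j (aeval g p) = ∑ l, aeval g (pderiv l p) * pderiv j (g l) := by
  induction p using MvPolynomial.induction_on with
  | C a => simp
  | add p q hp hq =>
    simp only [map_add, hp, hq, add_mul, Finset.sum_add_distrib]
  | mul_X p i hp =>
    classical
    have key : ∀ l : Fin n, pderiv l (p * X i) = pderiv l p * X i + (if l = i then p else 0) := by
      intro l
      rw [pderiv_mul]
      by_cases h : l = i
      · simp [h]
      · simp [h, pderiv_X_of_ne (Ne.symm h)]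
    simp only [map_mul, aeval_X, pderiv_mul, hp, key, map_add, map_mul, apply_ite (aeval g),
      map_zero, add_mul, Finset.sum_add_distrib, ite_mul, zero_mul]
    congr 1
    · rw [Finset.sum_mul]
      exact Finset.sum_congr rfl fun l _ => by ring
    · rw [Finset.sum_eq_single i] <;> simp_all

lemma aux_matmap_mul {R S : Type} [CommRing R] [CommRing S] {n : ℕ} (f : R →+* S)
    (A B : Matrix (Fin n) (Fin n) R) : (A * B).map f = A.map f * B.map f := by
  funext i j
  simp [Matrix.mul_apply, Matrix.map_apply, map_sum]

section aux
variable {K : Type} [Field K] {n : ℕ} (T : Matrix (Fin n) (Fin n) K)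

/-- `aeval (T⁻¹ x)` composed with `aeval (T x)` is the identity. -/
lemma aux_psi_phi (hT : IsUnit T.det) (p : MvPolynomial (Fin n) K) :
    aeval (fun l => ∑ k, C (T⁻¹ l k) * X k) (aeval (fun l => ∑ k, C (T l k) * X k) p) = p := by
  classical
  rw [← AlgHom.comp_apply, comp_aeval]
  have hgl : (fun l => aeval (fun l => ∑ k, C (T⁻¹ l k) * X k) (∑ k, C (T l k) * X k))
      = fun l => (X l : MvPolynomial (Fin n) K) := by
    funext l
    have : ∀ k, (aeval (fun l => ∑ k, C (T⁻¹ l k) * X k)) (C (T l k) * X k)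
        = ∑ m, C (T l k * T⁻¹ k m) * (X m : MvPolynomial (Fin n) K) := by
      intro k
      simp [Finset.mul_sum, mul_assoc, C_mul]
    rw [map_sum, Finset.sum_congr rfl fun k _ => this k, Finset.sum_comm]
    have h1 : T * T⁻¹ = 1 := Matrix.mul_nonsing_inv T hT
    have : ∀ m, ∑ k, C (T l k * T⁻¹ k m) * (X m : MvPolynomial (Fin n) K)
        = C ((1 : Matrix (Fin n) (Fin n) K) l m) * X m := by
      intro m
      rw [← Finset.sum_mul, ← map_sum, ← Matrix.mul_apply, h1]
    rw [Finset.sum_congr rfl fun m _ => this m]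
    simp [Matrix.one_apply, apply_ite (C : K → MvPolynomial (Fin n) K), ite_mul,
      Finset.sum_ite_eq, Finset.sum_ite_eq']
  rw [hgl]
  simp

end aux

section aux2
variable {K : Type} [Field K] {n : ℕ} (T : Matrix (Fin n) (Fin n) K)

lemma aux_H_eq (hT : IsUnit T.det) (H : Fin n → MvPolynomial (Fin n) K) (i : Fin n) :
    H i = ∑ j, C (T i j) * aeval (fun l => ∑ k, C (T⁻¹ l k) * X k) (conjH T H j) := by
  have expand : ∀ j, aeval (fun l => ∑ k, C (T⁻¹ l k) * X k) (conjH T H j)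
      = ∑ p, C (T⁻¹ j p) * H p := by
    intro j
    unfold conjH
    rw [map_sum]
    refine Finset.sum_congr rfl fun p _ => ?_
    rw [map_mul, aeval_C, algebraMap_eq, aux_psi_phi T hT]
  rw [Finset.sum_congr rfl fun j _ => by rw [expand j]]
  have : ∀ j, C (T i j) * ∑ p, C (T⁻¹ j p) * H p = ∑ p, C (T i j * T⁻¹ j p) * H p := by
    intro j
    simp [Finset.mul_sum, C_mul, mul_assoc]
  rw [Finset.sum_congr rfl fun j _ => this j, Finset.sum_comm]
  have h1 : T * T⁻¹ = 1 := Matrix.mul_nonsing_inv T hT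
  have : ∀ p, ∑ j, C (T i j * T⁻¹ j p) * H p = C ((1 : Matrix (Fin n) (Fin n) K) i p) * H p := by
    intro p
    rw [← Finset.sum_mul, ← map_sum, ← Matrix.mul_apply, h1]
  rw [Finset.sum_congr rfl fun p _ => this p]
  classical
  simp [Matrix.one_apply, apply_ite (C : K → MvPolynomial (Fin n) K), ite_mul,
    Finset.sum_ite_eq, Finset.sum_ite_eq']

lemma aux_pderiv_ginv (m j : Fin n) :
    pderiv j (∑ k, C (T⁻¹ m k) * X k : MvPolynomial (Fin n) K) = C (T⁻¹ m j) := by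
  classical
  rw [map_sum]
  simp [pderiv_C_mul, pderiv_X, Pi.single_apply, mul_ite, mul_one, mul_zero,
    Finset.sum_ite_eq, Finset.sum_ite_eq']

lemma aux_jacH_eq (hT : IsUnit T.det) (H : Fin n → MvPolynomial (Fin n) K) :
    jac H = T.map C * (jac (conjH T H)).map (aeval (fun l => ∑ k, C (T⁻¹ l k) * X k))
      * (T⁻¹).map C := by
  set ψ := (aeval (fun l => ∑ k, C (T⁻¹ l k) * X k) :
    MvPolynomial (Fin n) K →ₐ[K] MvPolynomial (Fin n) K)
  funext i j
  show pderiv j (H i) = _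
  conv_lhs => rw [aux_H_eq T hT H i]
  rw [map_sum]
  have perl : ∀ l, pderiv j (C (T i l) * ψ (conjH T H l))
      = ∑ m, C (T i l) * (ψ (pderiv m (conjH T H l)) * C (T⁻¹ m j)) := by
    intro l
    rw [pderiv_C_mul, aux_chain, Finset.mul_sum]
    exact Finset.sum_congr rfl fun m _ => by rw [aux_pderiv_ginv]
  rw [Finset.sum_congr rfl fun l _ => perl l, Finset.sum_comm]
  simp only [Matrix.mul_apply, Matrix.map_apply, Finset.sum_mul, jac, Matrix.of_apply]
  exact Finset.sum_congr rfl fun m _ => Finset.sum_congr rfl fun l _ => by ring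

end aux2


section aux3
variable {K : Type} [Field K] {n : ℕ} (S : Matrix (Fin n) (Fin n) K)

noncomputable def bigPsi : MvPolynomial (Fin n ⊕ Fin n) K →ₐ[K] MvPolynomial (Fin n ⊕ Fin n) K :=
  aeval (Sum.elim (fun l => ∑ k, C (S l k) * X (Sum.inl k))
                  (fun l => ∑ k, C (S l k) * X (Sum.inr k)))

lemma aux_comm_l (p : MvPolynomial (Fin n) K) :
    rename Sum.inl (aeval (fun l => ∑ k, C (S l k) * X k) p)
      = bigPsi S (rename Sum.inl p) := by
  rw [← AlgHom.comp_apply, comp_aeval, bigPsi, aeval_rename]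
  have : ((Sum.elim (fun l => ∑ k, C (S l k) * X (Sum.inl k))
      (fun l => ∑ k, C (S l k) * X (Sum.inr k))) ∘ Sum.inl)
      = fun i => rename Sum.inl (∑ k, (C (S i k) * X k : MvPolynomial (Fin n) K)) := by
    funext l
    simp [Function.comp]
  rw [this]

lemma aux_comm_r (p : MvPolynomial (Fin n) K) :
    rename Sum.inr (aeval (fun l => ∑ k, C (S l k) * X k) p)
      = bigPsi S (rename Sum.inr p) := by
  rw [← AlgHom.comp_apply, comp_aeval, bigPsi, aeval_rename]
  have : ((Sum.elim (fun l => ∑ k, C (S l k) * X (Sum.inl k))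
      (fun l => ∑ k, C (S l k) * X (Sum.inr k))) ∘ Sum.inr)
      = fun i => rename Sum.inr (∑ k, (C (S i k) * X k : MvPolynomial (Fin n) K)) := by
    funext l
    simp [Function.comp]
  rw [this]

end aux3

theorem stmt16 {K : Type} [Field K] [CharZero K] {n : ℕ}
    (H : Fin n → MvPolynomial (Fin n) K)
    (hq : (jac H).mulVec H = 0)
    (T : Matrix (Fin n) (Fin n) K) (hT : IsUnit T.det)
    (s : ℕ) (hs : s < n)
    (h1 : ∀ i : Fin n, (i : ℕ) < s → conjH T H i = 0)
    (h2 : ∀ i : Fin n, s ≤ (i : ℕ) →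
      conjH T H i ∈ supported K {k : Fin n | (k : ℕ) < s}) :
    jacX H * jacY H = 0 := by
  classical
  have matmapA : ∀ (f : MvPolynomial (Fin n) K →ₐ[K] MvPolynomial (Fin n ⊕ Fin n) K)
      (A B : Matrix (Fin n) (Fin n) (MvPolynomial (Fin n) K)),
      (A * B).map f = A.map f * B.map f := by
    intro f A B
    funext i j
    simp [Matrix.mul_apply, Matrix.map_apply, map_sum]
  have matmapB : ∀ (f : MvPolynomial (Fin n ⊕ Fin n) K →ₐ[K] MvPolynomial (Fin n ⊕ Fin n) K)
      (A B : Matrix (Fin n) (Fin n) (MvPolynomial (Fin n ⊕ Fin n) K)),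
      (A * B).map f = A.map f * B.map f := by
    intro f A B
    funext i j
    simp [Matrix.mul_apply, Matrix.map_apply, map_sum]
  -- the conjugated map has a Jacobian whose product with its `y`-copy vanishes
  have core : jacX (conjH T H) * jacY (conjH T H) = 0 := by
    funext i k
    show ∑ j, jacX (conjH T H) i j * jacY (conjH T H) j k = 0
    refine Finset.sum_eq_zero fun j _ => ?_
    by_cases hj : (j : ℕ) < s
    · have h0 : conjH T H j = 0 := h1 j hj
      simp [jacX, jacY, jac, Matrix.map_apply, h0]
    · have h0 : pderiv j (conjH T H i) = 0 := by
        by_cases hi : (i : ℕ) < s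
        · simp [h1 i hi]
        · refine pderiv_eq_zero_of_notMem_vars fun hmem => ?_
          exact hj (mem_supported.mp (h2 i (le_of_not_gt hi)) hmem)
      simp [jacX, jacY, jac, Matrix.map_apply, h0]
  have mapXF : ((jac (conjH T H)).map (aeval (fun l => ∑ k, C (T⁻¹ l k) * X k))).map
        (rename (Sum.inl : Fin n → Fin n ⊕ Fin n))
      = (jacX (conjH T H)).map (bigPsi T⁻¹) := by
    funext i j
    simp only [Matrix.map_apply, jacX]
    exact aux_comm_l T⁻¹ _
  have mapYF : ((jac (conjH T H)).map (aeval (fun l => ∑ k, C (T⁻¹ l k) * X k))).map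
        (rename (Sum.inr : Fin n → Fin n ⊕ Fin n))
      = (jacY (conjH T H)).map (bigPsi T⁻¹) := by
    funext i j
    simp only [Matrix.map_apply, jacY]
    exact aux_comm_r T⁻¹ _
  have mapT : ∀ (g : Fin n → Fin n ⊕ Fin n) (M : Matrix (Fin n) (Fin n) K),
      (M.map (C : K → MvPolynomial (Fin n) K)).map (rename g)
        = M.map (C : K → MvPolynomial (Fin n ⊕ Fin n) K) := by
    intro g M
    funext i j
    simp [Matrix.map_apply]
  have hXH : jacX H = T.map C * (jacX (conjH T H)).map (bigPsi T⁻¹) * (T⁻¹).map C := by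
    show (jac H).map (rename Sum.inl) = _
    rw [aux_jacH_eq T hT H, matmapA, matmapA, mapT, mapT, mapXF]
  have hYH : jacY H = T.map C * (jacY (conjH T H)).map (bigPsi T⁻¹) * (T⁻¹).map C := by
    show (jac H).map (rename Sum.inr) = _
    rw [aux_jacH_eq T hT H, matmapA, matmapA, mapT, mapT, mapYF]
  have hTinvT : (T⁻¹).map (C : K → MvPolynomial (Fin n ⊕ Fin n) K) * T.map C = 1 := by
    rw [← aux_matmap_mul (C : K →+* MvPolynomial (Fin n ⊕ Fin n) K), Matrix.nonsing_inv_mul T hT]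
    funext i j
    simp [Matrix.map_apply, Matrix.one_apply, apply_ite (C : K → MvPolynomial (Fin n ⊕ Fin n) K)]
  have hAB : (jacX (conjH T H)).map (bigPsi T⁻¹) * (jacY (conjH T H)).map (bigPsi T⁻¹) = 0 := by
    rw [← matmapB, core]
    funext i j
    simp [Matrix.map_apply]
  rw [hXH, hYH]
  have e1 : ∀ (A B : Matrix (Fin n) (Fin n) (MvPolynomial (Fin n ⊕ Fin n) K)),
      T.map C * A * (T⁻¹).map C * (T.map C * B * (T⁻¹).map C)
        = T.map C * (A * B) * (T⁻¹).map C := by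
    intro A B
    trans T.map (C : K → MvPolynomial (Fin n ⊕ Fin n) K)
        * (A * (((T⁻¹).map C * T.map C) * (B * (T⁻¹).map C)))
    · simp only [Matrix.mul_assoc]
    · rw [hTinvT, Matrix.one_mul]
      simp only [Matrix.mul_assoc]
  rw [e1, hAB, Matrix.mul_zero, Matrix.zero_mul]
end

section
/- Let K be a field of characteristic zero and x + H a quasi-translation over K such that (JH)·(JH)|_{x=y} = 0. Then H(x + t·H(y)) = H, where t is an additional indeterminate and y is a fresh tuple of n indeterminates; in particular H(x + H(y)) = H. -/
open MvPolynomial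

section Aux

variable {K : Type} [Field K] [CharZero K] {σ : Type} [DecidableEq σ]

theorem my_coeff_pderiv (i : σ) (m : σ →₀ ℕ) (p : MvPolynomial σ K) :
    coeff m (pderiv i p) = coeff (m + Finsupp.single i 1) p * ((m i : K) + 1) := by
  induction p using MvPolynomial.induction_on' with
  | monomial d a =>
    rw [pderiv_monomial]
    rcases Nat.eq_zero_or_pos (d i) with h | h
    · have h1 : d ≠ m + Finsupp.single i 1 := by
        intro he; rw [he] at h; simp at h
      simp [coeff_monomial, h, h1]
    · by_cases he : d = m + Finsupp.single i 1
      · have h2 : d - Finsupp.single i 1 = m := by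
          subst he; ext j; by_cases hj : j = i <;> simp [hj]
        have h3 : (d i : K) = (m i : K) + 1 := by
          subst he; simp
        simp [coeff_monomial, h2, he, h3]
      · have h2 : d - Finsupp.single i 1 ≠ m := by
          intro hc
          apply he
          ext j
          by_cases hj : j = i
          · subst hj
            have := congrArg (fun f => f j) hc
            simp [Finsupp.tsub_apply] at this ⊢
            omega
          · have := congrArg (fun f => f j) hc
            simp [Finsupp.tsub_apply, Finsupp.single_apply, if_neg (Ne.symm hj)] at this ⊢
            omega
        simp [coeff_monomial, h2, he]
  | add p q hp hq => simp [hp, hq, add_mul]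

theorem my_not_mem_vars {i : σ} {p : MvPolynomial σ K} (h : pderiv i p = 0) : i ∉ p.vars := by
  intro hv
  rw [mem_vars] at hv
  obtain ⟨d, hd, hdi⟩ := hv
  rw [Finsupp.mem_support_iff] at hdi
  set m := d - Finsupp.single i 1 with hm
  have hmd : m + Finsupp.single i 1 = d := by
    ext j
    by_cases hj : j = i
    · subst hj
      simp [hm, Finsupp.tsub_apply]
      omega
    · simp [hm, Finsupp.tsub_apply, Finsupp.single_apply, if_neg (Ne.symm hj)]
  have := my_coeff_pderiv i m p
  rw [h, hmd] at this
  rw [MvPolynomial.mem_support_iff] at hd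
  have h1 : ((m i : K) + 1) ≠ 0 := Nat.cast_add_one_ne_zero _
  simp at this
  rcases this with h' | h'
  · exact hd h'
  · exact h1 h'

theorem my_chain {τ : Type} [DecidableEq τ] {n : ℕ}
    (φ : Fin n → MvPolynomial τ K) (j : τ) (p : MvPolynomial (Fin n) K) :
    pderiv j (aeval φ p) = ∑ k, aeval φ (pderiv k p) * pderiv j (φ k) := by
  induction p using MvPolynomial.induction_on with
  | C a => simp
  | add p q hp hq =>
    simp only [map_add, hp, hq, ← Finset.sum_add_distrib, add_mul]
  | mul_X p k hp =>
    rw [map_mul, aeval_X, pderiv_mul, hp]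
    simp only [pderiv_mul, pderiv_X, Pi.single_apply, map_add, map_mul, aeval_X,
      apply_ite (aeval φ), map_one, map_zero, add_mul, Finset.sum_add_distrib,
      mul_ite, mul_one, mul_zero, ite_mul, zero_mul, Finset.sum_ite_eq,
      Finset.mem_univ, if_true, Finset.sum_mul]
    congr 1
    exact Finset.sum_congr rfl fun l _ => by ring

end Aux

theorem stmt17 {K : Type} [Field K] [CharZero K] {n : ℕ}
    (H : Fin n → MvPolynomial (Fin n) K)
    (hq : (jac H).mulVec H = 0)
    (h2 : jacX H * jacY H = 0) :
    (∀ i : Fin n,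
      aeval (fun k : Fin n => X (some (Sum.inl k)) +
          X (none : Option (Fin n ⊕ Fin n)) * rename (fun l => some (Sum.inr l)) (H k))
        (H i) = rename (fun k : Fin n => some (Sum.inl k)) (H i)) ∧
    (∀ i : Fin n,
      aeval (fun k : Fin n => (X (Sum.inl k) : MvPolynomial (Fin n ⊕ Fin n) K) + HY H k)
        (H i) = rename Sum.inl (H i)) := by
  classical
  -- Step 1: JH(x) · H(y) = 0 as a polynomial identity in independent variables x, y.
  have key : ∀ i : Fin n,
      (∑ k, (rename Sum.inl (pderiv k (H i)) : MvPolynomial (Fin n ⊕ Fin n) K)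
        * rename Sum.inr (H k)) = 0 := by
    intro i
    set G : MvPolynomial (Fin n ⊕ Fin n) K :=
      ∑ k, rename Sum.inl (pderiv k (H i)) * rename Sum.inr (H k) with hGdef
    have hder : ∀ j : Fin n, pderiv (Sum.inr j) G = 0 := by
      intro j
      have hL : ∀ k : Fin n,
          pderiv (Sum.inr j) ((rename Sum.inl (pderiv k (H i)) : MvPolynomial (Fin n ⊕ Fin n) K)) = 0 := by
        intro k
        apply pderiv_eq_zero_of_notMem_vars
        intro hv
        obtain ⟨u, _, hu⟩ := mem_vars_rename _ _ hv
        exact Sum.inl_ne_inr hu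
      have : pderiv (Sum.inr j) G
          = ∑ k, rename Sum.inl (pderiv k (H i)) * rename Sum.inr (pderiv j (H k)) := by
        rw [hGdef, map_sum]
        refine Finset.sum_congr rfl fun k _ => ?_
        rw [pderiv_mul, hL k, zero_mul, zero_add,
          pderiv_rename Sum.inr_injective]
      rw [this]
      have h2' := congrFun (congrFun h2 i) j
      simpa [jacX, jacY, jac, Matrix.mul_apply] using h2'
    have hvars : (G.vars : Set (Fin n ⊕ Fin n)) ⊆ Set.range Sum.inl := by
      intro s hs
      rcases s with a | b
      · exact ⟨a, rfl⟩
      · exact absurd hs (my_not_mem_vars (hder b))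
    obtain ⟨q, hqq⟩ := exists_rename_eq_of_vars_subset_range G Sum.inl Sum.inl_injective hvars
    have hchi : aeval (Sum.elim X X : Fin n ⊕ Fin n → MvPolynomial (Fin n) K) G
        = (jac H).mulVec H i := by
      rw [hGdef, map_sum]
      refine Finset.sum_congr rfl fun k _ => ?_
      rw [map_mul, aeval_rename, aeval_rename]
      simp [Matrix.mulVec, jac, Function.comp_def, aeval_X_left_apply]
    have hq' : (jac H).mulVec H i = 0 := by rw [hq]; rfl
    have hq0 : q = 0 := by
      have hA := congrArg (aeval (Sum.elim X X : Fin n ⊕ Fin n → MvPolynomial (Fin n) K)) hqq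
      rw [aeval_rename] at hA
      rw [show (Sum.elim X X ∘ Sum.inl : Fin n → MvPolynomial (Fin n) K) = X from rfl,
        aeval_X_left_apply, hchi, hq'] at hA
      exact hA
    rw [← hqq, hq0, map_zero]
  -- the substitution x ↦ x + t·H(y)
  set φ : Fin n → MvPolynomial (Option (Fin n ⊕ Fin n)) K :=
    fun k => X (some (Sum.inl k)) +
      X (none : Option (Fin n ⊕ Fin n)) * rename (fun l => some (Sum.inr l)) (H k) with hφ
  have hren : ∀ {τ : Type} (f : Fin n ⊕ Fin n → τ) (p : MvPolynomial (Fin n ⊕ Fin n) K),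
      aeval (fun s => (X (f s) : MvPolynomial τ K)) p = rename f p := by
    intro τ f p
    rw [show (fun s => (X (f s) : MvPolynomial τ K)) = (X ∘ f) from rfl, ← aeval_rename,
      aeval_X_left_apply]
  have hrenn : ∀ {τ : Type} (f : Fin n → τ) (p : MvPolynomial (Fin n) K),
      aeval (fun s => (X (f s) : MvPolynomial τ K)) p = rename f p := by
    intro τ f p
    rw [show (fun s => (X (f s) : MvPolynomial τ K)) = (X ∘ f) from rfl, ← aeval_rename,
      aeval_X_left_apply]
  have hφd : ∀ k : Fin n, pderiv (none : Option (Fin n ⊕ Fin n)) (φ k)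
      = rename (fun l => some (Sum.inr l)) (H k) := by
    intro k
    have hz : pderiv (none : Option (Fin n ⊕ Fin n))
        (rename (fun l => some (Sum.inr l)) (H k)) = 0 := by
      apply pderiv_eq_zero_of_notMem_vars
      intro hv
      obtain ⟨u, _, hu⟩ := mem_vars_rename _ _ hv
      exact Option.some_ne_none _ hu
    rw [hφ]
    rw [map_add, pderiv_mul, hz, mul_zero, add_zero, pderiv_X_self,
      pderiv_X_of_ne (Option.some_ne_none _), zero_add, one_mul]
  have hFd : ∀ i : Fin n, pderiv (none : Option (Fin n ⊕ Fin n)) (aeval φ (H i)) = 0 := by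
    intro i
    rw [my_chain]
    have hψ := congrArg (aeval (Sum.elim φ (fun l => X (some (Sum.inr l))) :
      Fin n ⊕ Fin n → MvPolynomial (Option (Fin n ⊕ Fin n)) K)) (key i)
    rw [map_sum, map_zero] at hψ
    rw [← hψ]
    refine Finset.sum_congr rfl fun k _ => ?_
    rw [hφd k, map_mul, aeval_rename, aeval_rename]
    congr 1
    exact (hrenn (fun l => some (Sum.inr l)) (H k)).symm
  have part1 : ∀ i : Fin n, aeval φ (H i) = rename (fun k : Fin n => some (Sum.inl k)) (H i) := by
    intro i
    have hnv : (((aeval φ (H i)).vars : Set (Option (Fin n ⊕ Fin n)))) ⊆ Set.range some := by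
      intro s hs
      rcases s with _ | s
      · exact absurd hs (my_not_mem_vars (hFd i))
      · exact ⟨s, rfl⟩
    obtain ⟨F', hF'⟩ := exists_rename_eq_of_vars_subset_range (aeval φ (H i)) some
      (Option.some_injective _) hnv
    have e1 : aeval (fun o : Option (Fin n ⊕ Fin n) => o.elim 0 X) (aeval φ (H i))
        = rename Sum.inl (H i) := by
      rw [comp_aeval_apply]
      have he : (fun k => aeval (fun o : Option (Fin n ⊕ Fin n) => o.elim 0 X) (φ k))
          = fun k => (X (Sum.inl k) : MvPolynomial (Fin n ⊕ Fin n) K) := by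
        funext k
        rw [hφ]
        simp
      rw [he, hrenn]
    have e2 : aeval (fun o : Option (Fin n ⊕ Fin n) => o.elim 0 X) (rename some F') = F' := by
      rw [aeval_rename]
      exact aeval_X_left_apply F'
    have hF'' : F' = rename Sum.inl (H i) := by
      rw [← e2, hF', e1]
    rw [← hF', hF'', rename_rename]
    rfl
  refine ⟨part1, fun i => ?_⟩
  have hv1 := congrArg (⇑(aeval (fun o : Option (Fin n ⊕ Fin n) => o.elim 1 X) :
    MvPolynomial (Option (Fin n ⊕ Fin n)) K →ₐ[K] MvPolynomial (Fin n ⊕ Fin n) K)) (part1 i)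
  rw [comp_aeval_apply, aeval_rename] at hv1
  have heL : (fun k => aeval (fun o : Option (Fin n ⊕ Fin n) => o.elim 1 X) (φ k))
      = fun k => (X (Sum.inl k) : MvPolynomial (Fin n ⊕ Fin n) K) + HY H k := by
    funext k
    rw [hφ]
    rw [map_add, map_mul]
    have : aeval (fun o : Option (Fin n ⊕ Fin n) => o.elim 1 X)
        (rename (fun l => some (Sum.inr l)) (H k)) = rename Sum.inr (H k) := by
      rw [aeval_rename]
      exact hrenn _ _
    simp only [aeval_X, this, HY]
    norm_num
  have heR : aeval ((fun o : Option (Fin n ⊕ Fin n) => o.elim 1 X) ∘ fun k => some (Sum.inl k))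
      (H i) = rename Sum.inl (H i) := hrenn _ _
  rw [heL, heR] at hv1
  exact hv1
end
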